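/- arXiv:2112.02900 — 3 statements merged into one kernel-verified Lean document; each statement's English description precedes it below -/
import Mathlib

section
/- Ping-pong for Schottky subgroups of PGL(3,ℝ) acting on the flag space (Proposition 3.6 / Corollary 3.9(1)): Let g₁,…,g_d ∈ GL(3,ℝ) be loxodromic elements and let H₁⁻,H₁⁺,…,H_d⁻,H_d⁺ be 2d pairwise disjoint nonempty compact subsets of the flag space X, each equal to the closure of its interior, such that for every i one has B⁻(g_i) ⊆ int(H_i⁻), B⁺(g_i) ⊆ int(H_i⁺), and H_i⁺ = X \ int(g_i·H_i⁻). Let Γ be the subgroup of the homeomorphism group of X generated by the actions of g₁,…,g_d, let U = X \ ⋃_{i=1}^d (H_i⁻ ∪ H_i⁺) and Ω = ⋃_{γ ∈ Γ} γ(closure of U). Then: (1) the group homomorphism from the free group on d generators to the homeomorphism group of X sending the i-th generator to the action of g_i is injective (so Γ is freely generated by g₁,…,g_d); (2) Ω is an open Γ-invariant subset of X; (3) Γ acts freely on Ω (if γ·x = x for some x ∈ Ω then γ = id) and properly discontinuously on Ω (for every compact K ⊆ Ω, the set of γ ∈ Γ with γ·K ∩ K ≠ ∅ is finite); moreover the action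 is cocompact, since the compact set closure(U) satisfies ⋃_{γ∈Γ} γ(closure U) = Ω. -/
open Matrix Filter Topology Set

noncomputable section

/-- `V3` is `ℝ³`. -/
abbrev V3 : Type := Fin 3 → ℝ

/-- The group `GL(3,ℝ)` of invertible `3 × 3` real matrices. -/
abbrev GL3 : Type := (Matrix (Fin 3) (Fin 3) ℝ)ˣ

/-- Nonzero vectors of `ℝ³` up to a nonzero scalar. -/
def projSetoid : Setoid {v : V3 // v ≠ 0} where
  r v w := ∃ c : ℝ, c ≠ 0 ∧ w.1 = c • v.1
  iseqv := by
    refine ⟨fun v => ⟨1, one_ne_zero, (one_smul ℝ v.1).symm⟩, ?_, ?_⟩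
    · rintro v w ⟨c, hc, h⟩
      exact ⟨c⁻¹, inv_ne_zero hc, by rw [h, smul_smul, inv_mul_cancel₀ hc, one_smul]⟩
    · rintro u v w ⟨c, hc, h⟩ ⟨d, hd, h'⟩
      exact ⟨d * c, mul_ne_zero hd hc, by rw [h', h, smul_smul]⟩

/-- The real projective plane `ℝP²`, as the quotient of `ℝ³ \ {0}` by nonzero scalings,
with the quotient topology.  (We use the same model for the dual projective plane `ℝP²*`,
a class `[f₁ : f₂ : f₃]*` of linear forms being recorded through its coefficient
vector `(f₁, f₂, f₃)`; the form acts on vectors by the dot product.) -/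
def RP2 : Type := Quotient projSetoid

/-- The projective class `[v]` of a nonzero vector. -/
def RP2.mk (v : V3) (hv : v ≠ 0) : RP2 := Quotient.mk projSetoid ⟨v, hv⟩

instance : TopologicalSpace RP2 :=
  inferInstanceAs (TopologicalSpace (Quotient projSetoid))

lemma RP2.ind {P : RP2 → Prop} (h : ∀ (v : V3) (hv : v ≠ 0), P (RP2.mk v hv)) (p : RP2) : P p := by
  refine Quotient.ind (fun a => ?_) p
  exact h a.1 a.2

lemma RP2.mk_eq_mk_iff {v w : V3} {hv : v ≠ 0} {hw : w ≠ 0} :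
    RP2.mk v hv = RP2.mk w hw ↔ ∃ c : ℝ, c ≠ 0 ∧ w = c • v :=
  ⟨fun h => Quotient.exact h, fun h => Quotient.sound h⟩

lemma ne_zero_of_coord {v : V3} (i : Fin 3) (h : v i ≠ 0) : v ≠ 0 :=
  fun h0 => h (by rw [h0]; rfl)

/-- The projective class of a vector, defaulting to `[e₁]` for the zero vector. -/
def RP2.mk' (v : V3) : RP2 :=
  if h : v = 0 then RP2.mk ![1, 0, 0] (ne_zero_of_coord 0 (by simp)) else RP2.mk v h

lemma e1_ne : (![1, 0, 0] : V3) ≠ 0 := ne_zero_of_coord 0 (by norm_num)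

lemma e3_ne : (![0, 0, 1] : V3) ≠ 0 := ne_zero_of_coord 2 (by simp)

lemma GL3.mulVec_ne {g : GL3} {v : V3} (hv : v ≠ 0) :
    (g : Matrix (Fin 3) (Fin 3) ℝ) *ᵥ v ≠ 0 := by
  intro h
  apply hv
  have h2 : ((g⁻¹ : GL3) : Matrix (Fin 3) (Fin 3) ℝ) *ᵥ
      ((g : Matrix (Fin 3) (Fin 3) ℝ) *ᵥ v) = 0 := by rw [h, Matrix.mulVec_zero]
  rwa [Matrix.mulVec_mulVec, Units.inv_mul, Matrix.one_mulVec] at h2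

/-- The action of `g ∈ GL(3,ℝ)` on `ℝP²`, `g · [v] = [g v]`. -/
def RP2.mapMat (g : GL3) : RP2 → RP2 :=
  Quotient.lift
    (fun a : {v : V3 // v ≠ 0} =>
      RP2.mk ((g : Matrix (Fin 3) (Fin 3) ℝ) *ᵥ a.1) (GL3.mulVec_ne a.2))
    (by
      rintro a b ⟨c, hc, h⟩
      apply Quotient.sound
      refine ⟨c, hc, ?_⟩
      show (g : Matrix (Fin 3) (Fin 3) ℝ) *ᵥ b.1 = c • ((g : Matrix (Fin 3) (Fin 3) ℝ) *ᵥ a.1)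
      rw [h, Matrix.mulVec_smul])

lemma RP2.mapMat_mk (g : GL3) (v : V3) (hv : v ≠ 0) :
    RP2.mapMat g (RP2.mk v hv) =
      RP2.mk ((g : Matrix (Fin 3) (Fin 3) ℝ) *ᵥ v) (GL3.mulVec_ne hv) := rfl

/-- The element of `GL(3,ℝ)` acting on coefficient vectors of linear forms the way `g`
acts on `ℝP²*`:  the coefficient vector of `f ∘ g⁻¹` is `(g⁻¹)ᵀ` applied to that of `f`. -/
def dualGL (g : GL3) : GL3 where
  val := ((g⁻¹ : GL3) : Matrix (Fin 3) (Fin 3) ℝ)ᵀ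
  inv := ((g : GL3) : Matrix (Fin 3) (Fin 3) ℝ)ᵀ
  val_inv := by rw [← Matrix.transpose_mul, Units.mul_inv, Matrix.transpose_one]
  inv_val := by rw [← Matrix.transpose_mul, Units.inv_mul, Matrix.transpose_one]

/-- The flag space `X`: pairs `([v], [f]) ∈ ℝP² × ℝP²*` with `f(v) = 0`. -/
def FlagSpace : Set (RP2 × RP2) :=
  {x | ∀ (v f : V3) (hv : v ≠ 0) (hf : f ≠ 0),
    x.1 = RP2.mk v hv → x.2 = RP2.mk f hf → f ⬝ᵥ v = 0}

/-- Points of the flag space. -/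
abbrev Flag3 : Type := ↥FlagSpace

lemma mem_flagSpace_mk {v f : V3} (hv : v ≠ 0) (hf : f ≠ 0) (h : f ⬝ᵥ v = 0) :
    (RP2.mk v hv, RP2.mk f hf) ∈ FlagSpace := by
  rintro v' f' hv' hf' hp hq
  obtain ⟨c, hc, hcv⟩ := RP2.mk_eq_mk_iff.1 hp
  obtain ⟨d, hd, hdf⟩ := RP2.mk_eq_mk_iff.1 hq
  rw [hcv, hdf, smul_dotProduct, dotProduct_smul, h]
  simp

lemma dot_invariance (g : GL3) (v f : V3) :
    (((dualGL g : GL3) : Matrix (Fin 3) (Fin 3) ℝ) *ᵥ f) ⬝ᵥ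
      ((g : Matrix (Fin 3) (Fin 3) ℝ) *ᵥ v) = f ⬝ᵥ v := by
  have h1 : ((dualGL g : GL3) : Matrix (Fin 3) (Fin 3) ℝ) *ᵥ f =
      f ᵥ* ((g⁻¹ : GL3) : Matrix (Fin 3) (Fin 3) ℝ) := Matrix.mulVec_transpose _ _
  rw [h1, Matrix.dotProduct_mulVec, Matrix.vecMul_vecMul, Units.inv_mul, Matrix.vecMul_one]

lemma flagPair_mem (g : GL3) {x : RP2 × RP2} (hx : x ∈ FlagSpace) :
    (RP2.mapMat g x.1, RP2.mapMat (dualGL g) x.2) ∈ FlagSpace := by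
  obtain ⟨p, q⟩ := x
  revert hx
  refine Quotient.inductionOn₂ p q ?_
  rintro ⟨v, hv⟩ ⟨f, hf⟩ hx
  have h0 : f ⬝ᵥ v = 0 := hx v f hv hf rfl rfl
  exact mem_flagSpace_mk _ _ (by rw [dot_invariance]; exact h0)

/-- The action of `g ∈ GL(3,ℝ)` on the flag space,
`g · ([v], [f]) = ([g v], [f ∘ g⁻¹])`. -/
def flagMap (g : GL3) (x : Flag3) : Flag3 :=
  ⟨(RP2.mapMat g x.1.1, RP2.mapMat (dualGL g) x.1.2), flagPair_mem g x.2⟩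

/-! ### Composition laws and continuity -/

lemma RP2.mapMat_mapMat (g h : GL3) (p : RP2) :
    RP2.mapMat g (RP2.mapMat h p) = RP2.mapMat (g * h) p := by
  refine Quotient.inductionOn p fun a => ?_
  apply Quotient.sound
  exact ⟨1, one_ne_zero, by simp [Matrix.mulVec_mulVec, Units.val_mul]⟩

lemma RP2.mapMat_one (p : RP2) : RP2.mapMat 1 p = p := by
  refine Quotient.inductionOn p fun a => ?_
  apply Quotient.sound
  exact ⟨1, one_ne_zero, by simp [Matrix.one_mulVec, Units.val_one]⟩

lemma dualGL_mul (g h : GL3) : dualGL (g * h) = dualGL g * dualGL h := by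
  apply Units.ext
  rw [Units.val_mul]
  show (((g * h)⁻¹ : GL3) : Matrix (Fin 3) (Fin 3) ℝ)ᵀ =
    ((g⁻¹ : GL3) : Matrix (Fin 3) (Fin 3) ℝ)ᵀ * ((h⁻¹ : GL3) : Matrix (Fin 3) (Fin 3) ℝ)ᵀ
  rw [_root_.mul_inv_rev, Units.val_mul, Matrix.transpose_mul]

lemma dualGL_one : dualGL (1 : GL3) = 1 := by
  apply Units.ext
  show (((1 : GL3)⁻¹ : GL3) : Matrix (Fin 3) (Fin 3) ℝ)ᵀ = ((1 : GL3) : Matrix (Fin 3) (Fin 3) ℝ)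
  rw [inv_one, Units.val_one, Matrix.transpose_one]

lemma flagMap_flagMap (g h : GL3) (x : Flag3) :
    flagMap g (flagMap h x) = flagMap (g * h) x := by
  apply Subtype.ext
  apply Prod.ext
  · exact RP2.mapMat_mapMat g h x.1.1
  · show RP2.mapMat (dualGL g) (RP2.mapMat (dualGL h) x.1.2) = RP2.mapMat (dualGL (g * h)) x.1.2
    rw [RP2.mapMat_mapMat, dualGL_mul]

lemma flagMap_one (x : Flag3) : flagMap 1 x = x := by
  apply Subtype.ext
  apply Prod.ext
  · exact RP2.mapMat_one x.1.1
  · show RP2.mapMat (dualGL 1) x.1.2 = x.1.2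
    rw [dualGL_one, RP2.mapMat_one]

lemma continuous_mulVec (M : Matrix (Fin 3) (Fin 3) ℝ) :
    Continuous fun v : V3 => M *ᵥ v := by
  have h : (fun v : V3 => M *ᵥ v) = fun v => fun i => ∑ j, M i j * v j := by
    funext v i
    simp [Matrix.mulVec, dotProduct]
  rw [h]
  exact continuous_pi fun i =>
    continuous_finset_sum _ fun j _ => continuous_const.mul (continuous_apply j)

lemma continuous_mapMat (g : GL3) : Continuous (RP2.mapMat g) := by
  apply Continuous.quotient_lift
  exact continuous_quotient_mk'.comp
    (Continuous.subtype_mk ((continuous_mulVec _).comp continuous_subtype_val) _)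

lemma continuous_flagMap (g : GL3) : Continuous (flagMap g) := by
  apply Continuous.subtype_mk
  exact ((continuous_mapMat g).comp (continuous_fst.comp continuous_subtype_val)).prodMk
    ((continuous_mapMat (dualGL g)).comp (continuous_snd.comp continuous_subtype_val))

/-- The action of `g ∈ GL(3,ℝ)` on the flag space, as a homeomorphism. -/
def flagHomeo (g : GL3) : Flag3 ≃ₜ Flag3 where
  toFun := flagMap g
  invFun := flagMap g⁻¹
  left_inv := fun x => by rw [flagMap_flagMap, inv_mul_cancel, flagMap_one]
  right_inv := fun x => by rw [flagMap_flagMap, mul_inv_cancel, flagMap_one]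
  continuous_toFun := continuous_flagMap g
  continuous_invFun := continuous_flagMap g⁻¹

/-- The group of homeomorphisms of a topological space
(with `(f * g) x = f (g x)`). -/
instance homeoGroup (Z : Type*) [TopologicalSpace Z] : Group (Z ≃ₜ Z) where
  mul f g := g.trans f
  one := Homeomorph.refl Z
  inv := Homeomorph.symm
  mul_assoc _ _ _ := Homeomorph.ext fun _ => rfl
  one_mul _ := Homeomorph.ext fun _ => rfl
  mul_one _ := Homeomorph.ext fun _ => rfl
  inv_mul_cancel f := Homeomorph.ext fun x => f.symm_apply_apply x

/-! ### Geometric objects in the flag space -/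

/-- The α-circle of a point `p ∈ ℝP²`: all flags whose point is `p`. -/
def Cα (p : RP2) : Set Flag3 := {x | x.1.1 = p}

/-- The β-circle of the projective line with defining form (class) `q`:
all flags whose plane is `ker q`. -/
def Cβ (q : RP2) : Set Flag3 := {x | x.1.2 = q}

/-- The plane of the flag `x` contains the direction of the vector `u`. -/
def planeContains (x : Flag3) (u : V3) : Prop :=
  ∀ (f : V3) (hf : f ≠ 0), x.1.2 = RP2.mk f hf → f ⬝ᵥ u = 0

/-- The point of the flag `x` lies on the projective line defined by the linear
form of coefficients `w`. -/
def pointOnForm (x : Flag3) (w : V3) : Prop :=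
  ∀ (v : V3) (hv : v ≠ 0), x.1.1 = RP2.mk v hv → w ⬝ᵥ v = 0

/-- The β-circle of the projective line spanned by the (independent) directions of
`u` and `w`: all flags whose plane contains both. -/
def CβSpan (u w : V3) : Set Flag3 := {x | planeContains x u ∧ planeContains x w}

lemma li_ne_zero_0 {v1 v2 v3 : V3} (h : LinearIndependent ℝ ![v1, v2, v3]) : v1 ≠ 0 := by
  have := h.ne_zero 0; simpa using this

lemma li_ne_zero_1 {v1 v2 v3 : V3} (h : LinearIndependent ℝ ![v1, v2, v3]) : v2 ≠ 0 := by
  have := h.ne_zero 1; simpa using this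

lemma li_ne_zero_2 {v1 v2 v3 : V3} (h : LinearIndependent ℝ ![v1, v2, v3]) : v3 ≠ 0 := by
  have := h.ne_zero 2; simpa using this

/-- The repulsive bouquet of circles `B⁻(g) = C_α([v₃]) ∪ C_β(span(v₂,v₃))` of a
loxodromic element with eigenvectors `v₁, v₂, v₃` (eigenvalues in decreasing order
of modulus). -/
def bouquetMinus (v2 v3 : V3) (h3 : v3 ≠ 0) : Set Flag3 :=
  Cα (RP2.mk v3 h3) ∪ CβSpan v2 v3

/-- The attractive bouquet of circles `B⁺(g) = C_α([v₁]) ∪ C_β(span(v₁,v₂))`. -/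
def bouquetPlus (v1 v2 : V3) (h1 : v1 ≠ 0) : Set Flag3 :=
  Cα (RP2.mk v1 h1) ∪ CβSpan v1 v2

/-- The dynamic set of a point `x` under a sequence of maps `g n`: all limits of
`g (n k) (x k)` for a strictly increasing sequence `(n k)` and a sequence `x k → x`. -/
def DynSet {M : Type*} [TopologicalSpace M] (g : ℕ → M → M) (x : M) : Set M :=
  {y | ∃ φ : ℕ → ℕ, StrictMono φ ∧ ∃ u : ℕ → M,
    Tendsto u atTop (𝓝 x) ∧ Tendsto (fun k => g (φ k) (u k)) atTop (𝓝 y)}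

end

noncomputable section PingPongMachinery

/-! ### Letters and reduced words -/

/-- The inverse of a letter. -/
def linv {d : ℕ} (a : Fin d × Bool) : Fin d × Bool := (a.1, !a.2)

lemma linv_linv {d : ℕ} (a : Fin d × Bool) : linv (linv a) = a := by
  cases a with | mk i b => cases b <;> rfl

lemma linv_ne {d : ℕ} (a : Fin d × Bool) : linv a ≠ a := by
  cases a with | mk i b => cases b <;> simp [linv]

/-- Reduced words over the alphabet of letters. -/
def RedW {d : ℕ} (w : List (Fin d × Bool)) : Prop :=
  List.Chain' (fun a b => b ≠ linv a) w

lemma redW_nil {d : ℕ} : RedW ([] : List (Fin d × Bool)) := List.isChain_nil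

lemma redW_singleton {d : ℕ} (a : Fin d × Bool) : RedW [a] := List.isChain_singleton a

lemma RedW.tail {d : ℕ} {a : Fin d × Bool} {w : List (Fin d × Bool)}
    (h : RedW (a :: w)) : RedW w := List.IsChain.tail h

lemma redW_cons_iff {d : ℕ} {a b : Fin d × Bool} {w : List (Fin d × Bool)} :
    RedW (a :: b :: w) ↔ b ≠ linv a ∧ RedW (b :: w) := List.isChain_cons_cons

/-- Group coercion lemmas for the homeomorphism group. -/
lemma homeo_mul_apply {Z : Type*} [TopologicalSpace Z] (f g : Z ≃ₜ Z) (x : Z) :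
    (f * g) x = f (g x) := rfl

lemma homeo_one_apply {Z : Type*} [TopologicalSpace Z] (x : Z) :
    (1 : Z ≃ₜ Z) x = x := rfl

lemma homeo_inv_coe {Z : Type*} [TopologicalSpace Z] (f : Z ≃ₜ Z) :
    ⇑(f⁻¹) = ⇑(f.symm) := rfl

/-- The abstract ping-pong data on the flag space: homeomorphisms `t a` and
compact tables `S a` indexed by letters, with the key dynamical identities. -/
structure PP (d : ℕ) where
  t : Fin d × Bool → Flag3 ≃ₜ Flag3
  S : Fin d × Bool → Set Flag3
  t_linv : ∀ a, t (linv a) = (t a)⁻¹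
  disj : ∀ a b, a ≠ b → Disjoint (S a) (S b)
  reg : ∀ a, closure (interior (S a)) = S a
  F2 : ∀ a, ⇑(t a) '' (S (linv a))ᶜ = interior (S a)
  F3 : ∀ a, ⇑(t a) '' (interior (S (linv a)))ᶜ = S a

namespace PP

variable {d : ℕ} (P : PP d)

lemma closedS (a : Fin d × Bool) : IsClosed (P.S a) := by
  rw [← P.reg a]; exact isClosed_closure

lemma t_apply_linv (a : Fin d × Bool) (x : Flag3) : P.t (linv a) (P.t a x) = x := by
  rw [P.t_linv a]
  exact (P.t a).symm_apply_apply x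

lemma t_apply_linv' (a : Fin d × Bool) (x : Flag3) : P.t a (P.t (linv a) x) = x := by
  have h := P.t_apply_linv (linv a) x
  rwa [linv_linv] at h

lemma F2' (a : Fin d × Bool) : ⇑(P.t a) '' P.S (linv a) = (interior (P.S a))ᶜ := by
  rw [← compl_compl (P.S (linv a)), (P.t a).image_compl, P.F2]

lemma F3' (a : Fin d × Bool) : ⇑(P.t a) '' interior (P.S (linv a)) = (P.S a)ᶜ := by
  rw [← compl_compl (interior (P.S (linv a))), (P.t a).image_compl, P.F3]

lemma sub_compl_of_ne {a b : Fin d × Bool} (h : b ≠ a) : P.S b ⊆ (P.S a)ᶜ := by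
  intro x hx hxa
  exact Set.disjoint_left.1 (P.disj b a h) hx hxa

lemma mapS_subset {a b : Fin d × Bool} (h : b ≠ linv a) :
    ⇑(P.t a) '' P.S b ⊆ interior (P.S a) := by
  rw [← P.F2 a]
  exact Set.image_mono (P.sub_compl_of_ne h)

lemma mapCompl_int (a : Fin d × Bool) {A : Set Flag3}
    (h : A ⊆ (interior (P.S (linv a)))ᶜ) : ⇑(P.t a) '' A ⊆ P.S a := by
  rw [← P.F3 a]
  exact Set.image_mono h

/-! ### Words acting on the flag space -/

/-- The homeomorphism associated to a word. -/
def wH (w : List (Fin d × Bool)) : Flag3 ≃ₜ Flag3 :=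
  w.foldr (fun a F => P.t a * F) 1

/-- The map associated to a word. -/
def wA (w : List (Fin d × Bool)) : Flag3 → Flag3 := ⇑(P.wH w)

@[simp] lemma wH_nil : P.wH [] = 1 := rfl

@[simp] lemma wH_cons (a : Fin d × Bool) (v : List (Fin d × Bool)) :
    P.wH (a :: v) = P.t a * P.wH v := rfl

@[simp] lemma wA_nil (x : Flag3) : P.wA [] x = x := rfl

@[simp] lemma wA_cons (a : Fin d × Bool) (v : List (Fin d × Bool)) (x : Flag3) :
    P.wA (a :: v) x = P.t a (P.wA v x) := rfl

@[simp] lemma wA_singleton (a : Fin d × Bool) (x : Flag3) :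
    P.wA [a] x = P.t a x := rfl

lemma wH_append (u v : List (Fin d × Bool)) : P.wH (u ++ v) = P.wH u * P.wH v := by
  induction u with
  | nil => simp
  | cons a u ih => simp [ih, mul_assoc]

lemma wA_append (u v : List (Fin d × Bool)) (x : Flag3) :
    P.wA (u ++ v) x = P.wA u (P.wA v x) := by
  show P.wH (u ++ v) x = P.wH u (P.wH v x)
  rw [wH_append]
  rfl

/-- The inverse word. -/
def invW {d : ℕ} (w : List (Fin d × Bool)) : List (Fin d × Bool) :=
  (w.map linv).reverse

lemma invW_cons {d : ℕ} (a : Fin d × Bool) (v : List (Fin d × Bool)) :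
    invW (a :: v) = invW v ++ [linv a] := by simp [invW]

lemma wA_invW (w : List (Fin d × Bool)) (x : Flag3) :
    P.wA (invW w) (P.wA w x) = x := by
  induction w generalizing x with
  | nil => rfl
  | cons a v ih =>
    rw [invW_cons, wA_cons, wA_append, wA_singleton, t_apply_linv]
    exact ih x

lemma redW_invW {d : ℕ} {w : List (Fin d × Bool)} (h : RedW w) : RedW (invW w) := by
  rw [RedW, List.Chain', invW, List.isChain_reverse, List.isChain_map]
  exact h.imp (fun {a b} hab => by
    show ¬ (linv a = linv (linv b))
    rw [linv_linv]
    exact fun he => hab he.symm)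

/-! ### The nested compact sets `Kt` and the limit sets `Lam` -/

/-- The compact set associated to a word: the image under the word of the complement
of the interior of the table of the inverse of its last letter. -/
def Kt (w : List (Fin d × Bool)) : Set Flag3 :=
  if hw : w = [] then Set.univ
  else P.wA w '' (interior (P.S (linv (w.getLast hw))))ᶜ

@[simp] lemma Kt_nil : P.Kt [] = Set.univ := by simp [Kt]

lemma Kt_ne {w : List (Fin d × Bool)} (hw : w ≠ []) :
    P.Kt w = P.wA w '' (interior (P.S (linv (w.getLast hw))))ᶜ := dif_neg hw

lemma Kt_singleton (a : Fin d × Bool) : P.Kt [a] = P.S a := by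
  rw [P.Kt_ne (List.cons_ne_nil a [])]
  have h1 : P.wA [a] = ⇑(P.t a) := funext fun x => rfl
  rw [List.getLast_singleton, h1, P.F3]

lemma Kt_cons (a : Fin d × Bool) {v : List (Fin d × Bool)} (hv : v ≠ []) :
    P.Kt (a :: v) = ⇑(P.t a) '' P.Kt v := by
  rw [P.Kt_ne (List.cons_ne_nil a v), P.Kt_ne hv, List.getLast_cons hv]
  have h1 : P.wA (a :: v) = ⇑(P.t a) ∘ P.wA v := funext fun x => rfl
  rw [h1, Set.image_comp]

lemma Kt_append (u : List (Fin d × Bool)) {v : List (Fin d × Bool)} (hv : v ≠ []) :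
    P.Kt (u ++ v) = P.wA u '' P.Kt v := by
  induction u with
  | nil =>
    have : P.wA [] = id := funext fun x => rfl
    simp [this]
  | cons a u ih =>
    have huv : u ++ v ≠ [] := fun h => hv (List.append_eq_nil_iff.1 h).2
    rw [List.cons_append, P.Kt_cons _ huv, ih, ← Set.image_comp]
    have : ⇑(P.t a) ∘ P.wA u = P.wA (a :: u) := funext fun x => rfl
    rw [this]

lemma Kt_sub_S : ∀ {v : List (Fin d × Bool)} {a : Fin d × Bool},
    RedW (a :: v) → P.Kt (a :: v) ⊆ P.S a := by
  intro v
  induction v with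
  | nil => intro a _; rw [P.Kt_singleton]
  | cons b v ih =>
    intro a hred
    obtain ⟨hba, htail⟩ := redW_cons_iff.1 hred
    rw [P.Kt_cons _ (List.cons_ne_nil b v)]
    exact (Set.image_mono (ih htail)).trans
      ((P.mapS_subset hba).trans interior_subset)

lemma Kt_sub_int {v : List (Fin d × Bool)} {a b : Fin d × Bool}
    (h : RedW (a :: b :: v)) : P.Kt (a :: b :: v) ⊆ interior (P.S a) := by
  obtain ⟨hba, htail⟩ := redW_cons_iff.1 h
  rw [P.Kt_cons _ (List.cons_ne_nil b v)]
  exact (Set.image_mono (P.Kt_sub_S htail)).trans (P.mapS_subset hba)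

lemma Kt_closed (w : List (Fin d × Bool)) : IsClosed (P.Kt w) := by
  by_cases hw : w = []
  · subst hw; simp
  · rw [P.Kt_ne hw]
    exact (P.wH w).isClosedMap _ isOpen_interior.isClosed_compl

lemma Kt_dropLast : ∀ {w : List (Fin d × Bool)}, RedW w → w ≠ [] →
    P.Kt w ⊆ P.Kt w.dropLast := by
  intro w
  induction w with
  | nil => intro _ h; exact absurd rfl h
  | cons a v ih =>
    intro hred _
    match v with
    | [] => simp
    | [b] =>
      have hba : b ≠ linv a := (redW_cons_iff.1 hred).1
      show P.Kt [a, b] ⊆ P.Kt [a]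
      rw [P.Kt_singleton, P.Kt_cons _ (List.cons_ne_nil b []), P.Kt_singleton]
      exact (P.mapS_subset hba).trans interior_subset
    | b :: c :: v2 =>
      have htail : RedW (b :: c :: v2) := hred.tail
      have h2 : (b :: c :: v2).dropLast ≠ [] := by simp
      calc P.Kt (a :: b :: c :: v2)
          = ⇑(P.t a) '' P.Kt (b :: c :: v2) := P.Kt_cons _ (by simp)
        _ ⊆ ⇑(P.t a) '' P.Kt ((b :: c :: v2).dropLast) :=
            Set.image_mono (ih htail (by simp))
        _ = P.Kt (a :: (b :: c :: v2).dropLast) := (P.Kt_cons _ h2).symm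
        _ = P.Kt ((a :: b :: c :: v2).dropLast) := by
            simp only [List.dropLast_cons₂]

/-- The decreasing family of closed sets whose intersection is the limit set. -/
def Lam (n : ℕ) : Set Flag3 :=
  ⋃ w ∈ {w : List (Fin d × Bool) | w.length = n ∧ RedW w}, P.Kt w

lemma Kt_sub_Lam {w : List (Fin d × Bool)} {n : ℕ} (hr : RedW w)
    (hl : w.length = n) : P.Kt w ⊆ P.Lam n :=
  Set.subset_biUnion_of_mem (u := fun w => P.Kt w) ⟨hl, hr⟩

lemma Lam_zero : P.Lam 0 = Set.univ := by
  apply Set.eq_univ_of_univ_subset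
  rw [← P.Kt_nil]
  exact P.Kt_sub_Lam redW_nil rfl

lemma Lam_closed (n : ℕ) : IsClosed (P.Lam n) := by
  apply Set.Finite.isClosed_biUnion
  · exact (List.finite_length_eq (Fin d × Bool) n).subset fun w hw => hw.1
  · exact fun w _ => P.Kt_closed w

lemma Lam_succ_sub (n : ℕ) : P.Lam (n + 1) ⊆ P.Lam n := by
  refine Set.iUnion₂_subset fun w hw => ?_
  obtain ⟨hl, hr⟩ := hw
  have hne : w ≠ [] := by intro h; subst h; simp at hl
  refine (P.Kt_dropLast hr hne).trans (P.Kt_sub_Lam (hr.prefix (List.dropLast_prefix w)) ?_)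
  rw [List.length_dropLast, hl]
  rfl

lemma Lam_anti : ∀ {m n : ℕ}, n ≤ m → P.Lam m ⊆ P.Lam n := by
  intro m n h
  induction m, h using Nat.le_induction with
  | base => exact subset_rfl
  | succ m _ ih => exact (P.Lam_succ_sub m).trans ih

/-! ### The core and the domain of discontinuity -/

/-- The complement of the union of the interiors of the tables;
this is the closure of the fundamental domain `U`. -/
def core : Set Flag3 := (⋃ a, interior (P.S a))ᶜ

lemma core_map (a : Fin d × Bool) : ⇑(P.t a) '' P.core ⊆ P.S a :=
  P.mapCompl_int a (Set.compl_subset_compl.2 (Set.subset_iUnion (fun b => interior (P.S b)) (linv a)))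

/-- The union of the images of the core under all words. -/
def Om : Set Flag3 := ⋃ w : List (Fin d × Bool), P.wA w '' P.core

lemma core_sub_Om : P.core ⊆ P.Om := fun x hx =>
  Set.mem_iUnion.2 ⟨[], ⟨x, hx, rfl⟩⟩

lemma Om_map (a : Fin d × Bool) : ⇑(P.t a) '' P.Om ⊆ P.Om := by
  rintro y ⟨x, hx, rfl⟩
  obtain ⟨w, z, hz, rfl⟩ := Set.mem_iUnion.1 hx
  exact Set.mem_iUnion.2 ⟨a :: w, ⟨z, hz, rfl⟩⟩

lemma wCore : ∀ {v : List (Fin d × Bool)} {a : Fin d × Bool},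
    RedW (a :: v) → P.wA (a :: v) '' P.core ⊆ P.S a := by
  intro v
  induction v with
  | nil =>
    intro a _
    have h1 : P.wA [a] = ⇑(P.t a) := funext fun x => rfl
    rw [h1]; exact P.core_map a
  | cons b v ih =>
    intro a hred
    obtain ⟨hba, htail⟩ := redW_cons_iff.1 hred
    have h1 : P.wA (a :: b :: v) = ⇑(P.t a) ∘ P.wA (b :: v) := funext fun x => rfl
    rw [h1, Set.image_comp]
    exact (Set.image_mono (ih htail)).trans
      ((P.mapS_subset hba).trans interior_subset)

/-! ### Invariance of the word action under free reduction -/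

lemma wA_step {L₁ L₂ : List (Fin d × Bool)} (h : FreeGroup.Red.Step L₁ L₂) :
    P.wA L₁ = P.wA L₂ := by
  induction h with
  | @not L₁ L₂ x b =>
    funext y
    rw [P.wA_append, P.wA_append, wA_cons, wA_cons]
    congr 1
    exact P.t_apply_linv' (x, b) (P.wA L₂ y)

lemma wA_red {L₁ L₂ : List (Fin d × Bool)} (h : FreeGroup.Red L₁ L₂) :
    P.wA L₁ = P.wA L₂ := by
  induction h with
  | refl => rfl
  | tail _ hstep ih => rw [ih, P.wA_step hstep]

lemma wA_reduce (L : List (Fin d × Bool)) : P.wA L = P.wA (FreeGroup.reduce L) :=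
  P.wA_red (FreeGroup.reduce.red)

lemma redW_of_no_bad {w : List (Fin d × Bool)}
    (h : ∀ (L₁ L₂ : List (Fin d × Bool)) (x : Fin d) (b : Bool),
      w ≠ L₁ ++ (x, b) :: (x, !b) :: L₂) : RedW w := by
  induction w with
  | nil => exact redW_nil
  | cons p w ih =>
    match w with
    | [] => exact redW_singleton p
    | q :: w2 =>
      rw [redW_cons_iff]
      constructor
      · intro he
        exact h [] w2 p.1 p.2 (by
          rw [he]
          cases p with | mk x b => rfl)
      · exact ih fun L₁ L₂ x b hne => h (p :: L₁) L₂ x b (by rw [hne]; rfl)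

lemma redW_reduce (L : List (Fin d × Bool)) : RedW (FreeGroup.reduce L) :=
  redW_of_no_bad fun _ _ _ _ hbad => FreeGroup.reduce.not hbad

lemma redW_toWord {d : ℕ} (u : FreeGroup (Fin d)) : RedW u.toWord := by
  have h := FreeGroup.reduce_toWord u
  rw [← h]
  exact redW_reduce _

/-! ### `Om` is the complement of the limit set -/

lemma disjCore : ∀ {w v : List (Fin d × Bool)}, RedW w → RedW v →
    w.length + 2 ≤ v.length → P.wA w '' P.core ∩ P.Kt v = ∅ := by
  intro w
  induction w with
  | nil =>
    intro v _ hrv hlen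
    match v with
    | b :: c :: v2 =>
      apply Set.eq_empty_iff_forall_notMem.2
      rintro x ⟨hx1, hx2⟩
      obtain ⟨z, hz, rfl⟩ := hx1
      have hzx : P.wA [] z = z := rfl
      rw [hzx] at hx2
      exact hz (Set.mem_iUnion.2 ⟨b, P.Kt_sub_int hrv hx2⟩)
  | cons a w ih =>
    intro v hrw hrv hlen
    match v with
    | b :: v2 =>
      have hv2 : v2 ≠ [] := by
        intro h; subst h; simp at hlen
      by_cases hba : b = a
      · subst hba
        have h1 : P.wA (b :: w) '' P.core = ⇑(P.t b) '' (P.wA w '' P.core) := by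
          have : P.wA (b :: w) = ⇑(P.t b) ∘ P.wA w := funext fun x => rfl
          rw [this, Set.image_comp]
        rw [h1, P.Kt_cons _ hv2, ← Set.image_inter (P.t b).injective,
          ih hrw.tail hrv.tail (by simp at hlen ⊢; omega), Set.image_empty]
      · apply Set.eq_empty_iff_forall_notMem.2
        rintro x ⟨hx1, hx2⟩
        have hxa : x ∈ P.S a := P.wCore hrw hx1
        have hxb : x ∈ P.S b := P.Kt_sub_S hrv hx2
        exact Set.disjoint_left.1 (P.disj b a hba) hxb hxa

lemma Om_disj_iInter : P.Om ∩ (⋂ n, P.Lam n) = ∅ := by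
  apply Set.eq_empty_iff_forall_notMem.2
  rintro x ⟨hx1, hx2⟩
  obtain ⟨w, z, hz, rfl⟩ := Set.mem_iUnion.1 hx1
  set w' := FreeGroup.reduce w with hw'
  have hx : P.wA w' z ∈ P.Lam (w'.length + 2) := by
    rw [← P.wA_reduce w]
    exact Set.mem_iInter.1 hx2 _
  obtain ⟨v, hv, hmem⟩ := Set.mem_iUnion₂.1 hx
  have := P.disjCore (redW_reduce w) hv.2 (le_of_eq hv.1.symm)
  rw [Set.eq_empty_iff_forall_notMem] at this
  exact this (P.wA w' z) ⟨⟨z, hz, (by rw [← P.wA_reduce w])⟩, hmem⟩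

lemma notLam_mem_Om : ∀ n, ∀ x : Flag3, x ∉ P.Lam n → x ∈ P.Om := by
  intro n
  induction n with
  | zero => intro x hx; exact absurd (by rw [P.Lam_zero]; trivial) hx
  | succ n ih =>
    intro x hnot
    by_cases hxc : x ∈ P.core
    · exact P.core_sub_Om hxc
    · have hxint : x ∈ ⋃ a, interior (P.S a) := not_not.1 hxc
      obtain ⟨a, hxa⟩ := Set.mem_iUnion.1 hxint
      rcases Nat.eq_zero_or_pos n with hn0 | hnpos
      · subst hn0
        exfalso
        apply hnot
        refine P.Kt_sub_Lam (redW_singleton a) rfl ?_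
        rw [P.Kt_singleton]
        exact interior_subset hxa
      · set y := P.t (linv a) x with hy
        have hyn : y ∉ P.Lam n := by
          intro hyL
          obtain ⟨v, ⟨hvl, hvr⟩, hyK⟩ := Set.mem_iUnion₂.1 hyL
          match v, hvl with
          | [], hvl => exact absurd hvl (by simp; omega)
          | b :: v2, hvl =>
            by_cases hb : b = linv a
            · subst hb
              match v2 with
              | [] =>
                rw [P.Kt_singleton] at hyK
                have : y ∈ (P.S (linv a))ᶜ := by
                  rw [← P.F3' (linv a)]
                  refine ⟨x, ?_, rfl⟩
                  rw [linv_linv]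
                  exact hxa
                exact this hyK
              | c :: v3 =>
                rw [P.Kt_cons _ (List.cons_ne_nil c v3)] at hyK
                obtain ⟨z, hzK, hzy⟩ := hyK
                have hxz : x = z := by
                  have h1 : P.t a y = x := P.t_apply_linv' a x
                  have h2 : P.t a (P.t (linv a) z) = z := P.t_apply_linv' a z
                  rw [← hzy] at h1
                  rw [h2] at h1
                  exact h1.symm
                have hzs : z ∈ P.S c := P.Kt_sub_S hvr.tail hzK
                have hca : c ≠ a := by
                  have := (redW_cons_iff.1 hvr).1
                  rwa [linv_linv] at this
                rw [← hxz] at hzs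
                exact Set.disjoint_left.1 (P.disj c a hca) hzs (interior_subset hxa)
            · apply hnot
              have hxK : x ∈ P.Kt (a :: b :: v2) := by
                rw [P.Kt_cons _ (List.cons_ne_nil b v2)]
                exact ⟨y, hyK, P.t_apply_linv' a x⟩
              refine P.Kt_sub_Lam ?_ ?_ hxK
              · exact redW_cons_iff.2 ⟨hb, hvr⟩
              · simpa using hvl
        have hyOm : y ∈ P.Om := ih y hyn
        have : P.t a y ∈ P.Om := P.Om_map a ⟨y, hyOm, rfl⟩
        rwa [P.t_apply_linv' a x] at this

lemma Om_eq_compl : P.Om = (⋂ n, P.Lam n)ᶜ := by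
  apply Set.Subset.antisymm
  · intro x hx hxI
    have := P.Om_disj_iInter
    rw [Set.eq_empty_iff_forall_notMem] at this
    exact this x ⟨hx, hxI⟩
  · intro x hx
    obtain ⟨n, hn⟩ : ∃ n, x ∉ P.Lam n := by
      by_contra h
      push_neg at h
      exact hx (Set.mem_iInter.2 h)
    exact P.notLam_mem_Om n x hn

lemma isOpen_Om : IsOpen P.Om := by
  rw [P.Om_eq_compl]
  exact (isClosed_iInter fun n => P.Lam_closed n).isOpen_compl

/-! ### The key dichotomy -/

lemma dich {T : List (Fin d × Bool)} {x : Flag3} {n : ℕ} (hT : RedW T)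
    (hn : 1 ≤ n) (hlen : 2 * n ≤ T.length) :
    x ∈ P.Lam n ∨ P.wA T x ∈ P.Lam (T.length - n + 1) := by
  set m := T.length with hm
  set s := m - n with hs
  have hslt : s < T.length := by omega
  set c := T[s] with hc
  set Q := T.drop (s + 1) with hQ
  set Pw := T.take (s + 1) with hPw
  have hPQ : Pw ++ Q = T := List.take_append_drop _ _
  have hdrop : T.drop s = c :: Q := List.drop_eq_getElem_cons hslt
  have hPw2 : Pw = T.take s ++ [c] := by
    rw [hPw, List.take_succ, List.getElem?_eq_getElem hslt]
    rfl
  have hPne : Pw ≠ [] := by rw [hPw2]; simp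
  have hPlast : Pw.getLast hPne = c := by
    have h3 : Pw.getLast? = some c := by rw [hPw2]; exact List.getLast?_concat
    rw [List.getLast?_eq_getLast hPne] at h3
    exact Option.some_injective _ h3
  set y := P.wA Q x with hy
  by_cases hyS : y ∈ P.S (linv c)
  · left
    set R := invW (c :: Q) with hR
    have hcQred : RedW (c :: Q) := by
      rw [← hdrop]; exact hT.drop s
    have hRred : RedW R := redW_invW hcQred
    have hRne : R ≠ [] := by simp [hR, invW]
    have hRlen : R.length = n := by
      have h1 : Q.length = m - (s + 1) := by rw [hQ, List.length_drop]
      simp only [hR, invW, List.length_reverse, List.length_map, List.length_cons]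
      omega
    have hRlast : R.getLast hRne = linv c := by
      have h3 : R.getLast? = some (linv c) := by
        rw [hR, invW]
        simp only [List.map_cons, List.reverse_cons]
        exact List.getLast?_concat
      rw [List.getLast?_eq_getLast hRne] at h3
      exact Option.some_injective _ h3
    have hxK : x ∈ P.Kt R := by
      rw [P.Kt_ne hRne, hRlast, linv_linv]
      refine ⟨P.t c y, ?_, ?_⟩
      · rw [← P.F2' c]
        exact ⟨y, hyS, rfl⟩
      · have h1 : P.t c y = P.wA (c :: Q) x := rfl
        rw [h1]
        exact P.wA_invW (c :: Q) x
    exact P.Kt_sub_Lam hRred hRlen hxK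
  · right
    have hTx : P.wA T x = P.wA Pw y := by rw [← hPQ, P.wA_append]
    have hmem : P.wA T x ∈ P.Kt Pw := by
      rw [P.Kt_ne hPne, hPlast, hTx]
      exact ⟨y, fun hint => hyS (interior_subset hint), rfl⟩
    have hPlen : Pw.length = m - n + 1 := by
      rw [hPw, List.length_take]
      omega
    exact P.Kt_sub_Lam (hT.prefix (List.take_prefix _ _)) hPlen hmem

/-! ### Powers of a word -/

/-- Concatenated powers of a word. -/
def powW {d : ℕ} (L : List (Fin d × Bool)) : ℕ → List (Fin d × Bool)
  | 0 => []
  | k + 1 => L ++ powW L k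

lemma powW_length {d : ℕ} (L : List (Fin d × Bool)) (k : ℕ) :
    (powW L k).length = k * L.length := by
  induction k with
  | zero => simp [powW]
  | succ k ih => simp [powW, ih]; ring

lemma wA_powW {L : List (Fin d × Bool)} {x : Flag3} (h : P.wA L x = x) (k : ℕ) :
    P.wA (powW L k) x = x := by
  induction k with
  | zero => rfl
  | succ k ih => rw [powW, P.wA_append, ih, h]

lemma redW_powW {d : ℕ} {a : Fin d × Bool} {T : List (Fin d × Bool)}
    (h : RedW (a :: T)) (hcc : a ≠ linv ((a :: T).getLast (List.cons_ne_nil a T)))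
    (k : ℕ) : RedW (powW (a :: T) k) := by
  induction k with
  | zero => exact redW_nil
  | succ k ih =>
    rw [powW, RedW, List.Chain', List.isChain_append]
    refine ⟨h, ih, ?_⟩
    intro p hp q hq
    rw [List.getLast?_eq_getLast (List.cons_ne_nil a T)] at hp
    match k, hq with
    | k + 1, hq =>
      have : (powW (a :: T) (k + 1)).head? = some a := by
        rw [powW, List.cons_append]
        rfl
      rw [this] at hq
      cases hp
      cases hq
      exact hcc

/-! ### No fixed points on `Om` -/

lemma fix_aux : ∀ (N : ℕ) (L : List (Fin d × Bool)) (x : Flag3),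
    L.length ≤ N → RedW L → L ≠ [] → x ∈ P.Om → P.wA L x = x → False := by
  intro N
  induction N with
  | zero =>
    intro L x hl _ hne _ _
    match L, hl with
    | [], _ => exact hne rfl
  | succ N ih =>
    intro L x hl hr hne hOm hfix
    match L with
    | a :: T =>
      set gl := (a :: T).getLast (List.cons_ne_nil a T) with hgl
      by_cases hcc : a ≠ linv gl
      · -- cyclically reduced case
        have hxint : x ∈ ⋂ n, P.Lam n := by
          rw [Set.mem_iInter]
          intro n
          rcases Nat.eq_zero_or_pos n with h0 | hnpos
          · subst h0; rw [P.Lam_zero]; trivial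
          · set W := powW (a :: T) (2 * n) with hW
            have hred : RedW W := redW_powW hr hcc (2 * n)
            have hWfix : P.wA W x = x := P.wA_powW hfix (2 * n)
            have hWlen : 2 * n ≤ W.length := by
              rw [hW, powW_length]
              have : 1 ≤ (a :: T).length := by simp
              calc 2 * n = 2 * n * 1 := by ring
                _ ≤ 2 * n * (a :: T).length := by
                    exact Nat.mul_le_mul_left _ this
            rcases P.dich hred hnpos hWlen with h | h
            · exact h
            · rw [hWfix] at h
              exact P.Lam_anti (by omega) h
        have := P.Om_disj_iInter
        rw [Set.eq_empty_iff_forall_notMem] at this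
        exact this x ⟨hOm, hxint⟩
      · push_neg at hcc
        have hTne : T ≠ [] := by
          intro h
          subst h
          exact linv_ne a (by
            have : gl = a := rfl
            rw [this] at hcc
            exact hcc.symm)
        have hglT : T.getLast hTne = gl := (List.getLast_cons hTne).symm
        set x' := P.t (linv a) x with hx'
        have hx'Om : x' ∈ P.Om := P.Om_map (linv a) ⟨x, hOm, rfl⟩
        have hTfix : P.wA T x = x' := by
          have h1 : P.t a (P.wA T x) = x := hfix
          have := congrArg (P.t (linv a)) h1
          rwa [P.t_apply_linv a] at this
        set M := T.dropLast with hM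
        have hTM : M ++ [linv a] = T := by
          have h1 := List.dropLast_append_getLast hTne
          rw [hglT] at h1
          have h2 : gl = linv a := by rw [hcc, linv_linv]
          rw [← h2]
          exact h1
        have hMne : M ≠ [] := by
          intro h
          rw [h] at hTM
          simp at hTM
          have hred2 : RedW (a :: T) := hr
          rw [← hTM] at hred2
          exact (redW_cons_iff.1 hred2).1 rfl
        have hMfix : P.wA M x' = x' := by
          have h1 : P.wA T x = P.wA M (P.t (linv a) x) := by
            rw [← hTM, P.wA_append, P.wA_singleton]
          rw [hTfix, ← hx'] at h1
          exact h1.symm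
        have hMred : RedW M := (hr.tail).prefix (List.dropLast_prefix T)
        have hMlen : M.length ≤ N := by
          have h1 : M.length = T.length - 1 := List.length_dropLast
          have h2 : (a :: T).length ≤ N + 1 := hl
          simp at h2
          omega
        exact ih M x' hMlen hMred hMne hx'Om hMfix

/-! ### Ping-pong for points outside all tables -/

lemma hit : ∀ (v : List (Fin d × Bool)) (a : Fin d × Bool) (x : Flag3),
    RedW (a :: v) → (∀ b, x ∉ P.S b) → P.wA (a :: v) x ∈ P.S a := by
  intro v
  induction v with
  | nil =>
    intro a x _ hx
    rw [P.wA_singleton]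
    have : P.t a x ∈ interior (P.S a) := by
      rw [← P.F2 a]
      exact ⟨x, hx (linv a), rfl⟩
    exact interior_subset this
  | cons b v ih =>
    intro a x hred hx
    obtain ⟨hba, htail⟩ := redW_cons_iff.1 hred
    have h1 : P.wA (b :: v) x ∈ P.S b := ih b x htail hx
    rw [P.wA_cons]
    exact interior_subset (P.mapS_subset hba ⟨P.wA (b :: v) x, h1, rfl⟩)

/-! ### Interior of the union of the tables -/

lemma int_iUnion : interior (⋃ a, P.S a) = ⋃ a, interior (P.S a) := by
  apply Set.Subset.antisymm
  · intro x hx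
    obtain ⟨a, hxa⟩ := Set.mem_iUnion.1 (interior_subset hx)
    refine Set.mem_iUnion.2 ⟨a, ?_⟩
    rw [mem_interior]
    refine ⟨interior (⋃ b, P.S b) ∩ ⋂ b ∈ {b | b ≠ a}, (P.S b)ᶜ, ?_, ?_, ?_⟩
    · intro y ⟨hy1, hy2⟩
      obtain ⟨c, hyc⟩ := Set.mem_iUnion.1 (interior_subset hy1)
      by_cases hca : c = a
      · rwa [hca] at hyc
      · exact absurd hyc (Set.mem_iInter₂.1 hy2 c hca)
    · exact isOpen_interior.inter (Set.Finite.isOpen_biInter (Set.toFinite _)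
        fun b _ => (P.closedS b).isOpen_compl)
    · refine ⟨hx, Set.mem_iInter₂.2 fun b hb => ?_⟩
      intro hxb
      exact Set.disjoint_left.1 (P.disj b a hb) hxb hxa
  · exact Set.iUnion_subset fun a => interior_mono (Set.subset_iUnion _ a)

lemma core_eq_closure : P.core = closure ((⋃ a, P.S a)ᶜ) := by
  rw [closure_compl, P.int_iUnion, core]

end PP

/-! ### Instantiation of the ping-pong data from the hypotheses of the theorem -/

/-- Construction of the ping-pong data from loxodromic elements and tables. -/
def mkPP {d : ℕ} (g : Fin d → GL3) (Hm Hp : Fin d → Set Flag3)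
    (hregm : ∀ i, Hm i = closure (interior (Hm i)))
    (hregp : ∀ i, Hp i = closure (interior (Hp i)))
    (hdisj1 : ∀ i j, i ≠ j → Disjoint (Hm i) (Hm j))
    (hdisj2 : ∀ i j, i ≠ j → Disjoint (Hp i) (Hp j))
    (hdisj3 : ∀ i j, Disjoint (Hm i) (Hp j))
    (hHp : ∀ i, Hp i = Set.univ \ interior (flagMap (g i) '' Hm i)) : PP d := by
  have hIntIm : ∀ i, interior (⇑(flagHomeo (g i)) '' Hm i) = (Hp i)ᶜ := by
    intro i
    have h1 : Hp i = (interior (⇑(flagHomeo (g i)) '' Hm i))ᶜ := by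
      rw [hHp i, Set.compl_eq_univ_diff]
      rfl
    rw [h1, compl_compl]
  have hC : ∀ i, ⇑(flagHomeo (g i)) '' interior (Hm i) = (Hp i)ᶜ := by
    intro i
    rw [Homeomorph.image_interior, hIntIm]
  have hB : ∀ i, ⇑(flagHomeo (g i)) '' Hm i = (interior (Hp i))ᶜ := by
    intro i
    conv_lhs => rw [hregm i]
    rw [Homeomorph.image_closure, hC, closure_compl]
  exact
  { t := fun a => cond a.2 (flagHomeo (g a.1)) (flagHomeo (g a.1))⁻¹
    S := fun a => cond a.2 (Hp a.1) (Hm a.1)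
    t_linv := by
      rintro ⟨i, b⟩
      cases b
      · show flagHomeo (g i) = ((flagHomeo (g i))⁻¹)⁻¹
        exact (inv_inv _).symm
      · rfl
    disj := by
      rintro ⟨i, b⟩ ⟨j, c⟩ hne
      cases b <;> cases c <;> simp only [Bool.cond_true, Bool.cond_false]
      · exact hdisj1 i j (fun h => hne (by rw [h]))
      · exact hdisj3 i j
      · exact (hdisj3 j i).symm
      · exact hdisj2 i j (fun h => hne (by rw [h]))
    reg := by
      rintro ⟨i, b⟩
      cases b
      · exact (hregm i).symm
      · exact (hregp i).symm
    F2 := by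
      rintro ⟨i, b⟩
      cases b
      · show ⇑((flagHomeo (g i))⁻¹) '' (Hp i)ᶜ = interior (Hm i)
        rw [← hC i]
        exact (flagHomeo (g i)).symm_image_image _
      · show ⇑(flagHomeo (g i)) '' (Hm i)ᶜ = interior (Hp i)
        rw [(flagHomeo (g i)).image_compl, hB i, compl_compl]
    F3 := by
      rintro ⟨i, b⟩
      cases b
      · show ⇑((flagHomeo (g i))⁻¹) '' (interior (Hp i))ᶜ = Hm i
        rw [← hB i]
        exact (flagHomeo (g i)).symm_image_image _
      · show ⇑(flagHomeo (g i)) '' (interior (Hm i))ᶜ = Hp i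
        rw [(flagHomeo (g i)).image_compl, hC i, compl_compl] }

/-- A base point of the flag space. -/
def basePoint : Flag3 :=
  ⟨(RP2.mk ![1, 0, 0] e1_ne, RP2.mk ![0, 0, 1] e3_ne),
    mem_flagSpace_mk e1_ne e3_ne (by simp [dotProduct, Fin.sum_univ_three])⟩

/-! ### Compactness of the flag space -/

lemma continuous_dotProduct_pair :
    Continuous (fun p : V3 × V3 => p.2 ⬝ᵥ p.1) := by
  have h : (fun p : V3 × V3 => p.2 ⬝ᵥ p.1) =
      fun p => ∑ j, p.2 j * p.1 j := by
    funext p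
    rfl
  rw [h]
  exact continuous_finset_sum _ fun j _ =>
    ((continuous_apply j).comp continuous_snd).mul ((continuous_apply j).comp continuous_fst)

lemma isCompact_flagSpace : IsCompact FlagSpace := by
  classical
  set C : Set (V3 × V3) :=
    {p | ‖p.1‖ = 1 ∧ ‖p.2‖ = 1 ∧ p.2 ⬝ᵥ p.1 = 0} with hCdef
  have hCclosed : IsClosed C := by
    have h1 : IsClosed {p : V3 × V3 | ‖p.1‖ = 1} :=
      isClosed_eq (continuous_fst.norm) continuous_const
    have h2 : IsClosed {p : V3 × V3 | ‖p.2‖ = 1} :=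
      isClosed_eq (continuous_snd.norm) continuous_const
    have h3 : IsClosed {p : V3 × V3 | p.2 ⬝ᵥ p.1 = 0} :=
      isClosed_eq continuous_dotProduct_pair continuous_const
    exact (h1.inter (h2.inter h3))
  have hCcompact : IsCompact C := by
    refine IsCompact.of_isClosed_subset
      ((isCompact_sphere (0 : V3) 1).prod (isCompact_sphere (0 : V3) 1)) hCclosed ?_
    rintro ⟨p1, p2⟩ ⟨h1, h2, _⟩
    exact ⟨mem_sphere_zero_iff_norm.2 h1, mem_sphere_zero_iff_norm.2 h2⟩
  -- transfer to the subtype product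
  set D := {v : V3 // v ≠ 0} × {f : V3 // f ≠ 0} with hD
  set ι : D → V3 × V3 := fun q => (q.1.1, q.2.1) with hι
  have hemb : Topology.IsEmbedding ι := by
    exact (Topology.IsEmbedding.subtypeVal.prodMap Topology.IsEmbedding.subtypeVal)
  set C' : Set D := ι ⁻¹' C with hC'
  have himg : ι '' C' = C := by
    apply Set.Subset.antisymm
    · exact Set.image_preimage_subset _ _
    · rintro ⟨p1, p2⟩ ⟨h1, h2, h3⟩
      have hp1 : p1 ≠ 0 := by
        intro h; rw [h] at h1; simp at h1
      have hp2 : p2 ≠ 0 := by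
        intro h; rw [h] at h2; simp at h2
      exact ⟨(⟨p1, hp1⟩, ⟨p2, hp2⟩), ⟨h1, h2, h3⟩, rfl⟩
  have hC'compact : IsCompact C' := by
    rw [hemb.isCompact_iff, himg]
    exact hCcompact
  -- the projection to the flag space
  set F : D → RP2 × RP2 := fun q =>
    (Quotient.mk projSetoid q.1, Quotient.mk projSetoid q.2) with hF
  have hFcont : Continuous F := by
    refine Continuous.prodMk ?_ ?_
    · exact continuous_quotient_mk'.comp continuous_fst
    · exact continuous_quotient_mk'.comp continuous_snd
  have himg2 : F '' C' = FlagSpace := by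
    apply Set.Subset.antisymm
    · rintro x ⟨⟨q1, q2⟩, ⟨_, _, h3⟩, rfl⟩
      exact mem_flagSpace_mk q1.2 q2.2 h3
    · intro x hx
      obtain ⟨p, q⟩ := x
      revert hx
      refine Quotient.inductionOn₂ p q ?_
      rintro ⟨v, hv⟩ ⟨f, hf⟩ hx
      have hdot : f ⬝ᵥ v = 0 := hx v f hv hf rfl rfl
      have hvn : ‖v‖ ≠ 0 := norm_ne_zero_iff.2 hv
      have hfn : ‖f‖ ≠ 0 := norm_ne_zero_iff.2 hf
      have hv' : ‖v‖⁻¹ • v ≠ 0 := smul_ne_zero (inv_ne_zero hvn) hv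
      have hf' : ‖f‖⁻¹ • f ≠ 0 := smul_ne_zero (inv_ne_zero hfn) hf
      refine ⟨(⟨‖v‖⁻¹ • v, hv'⟩, ⟨‖f‖⁻¹ • f, hf'⟩), ⟨?_, ?_, ?_⟩, ?_⟩
      · rw [norm_smul, norm_inv, norm_norm, inv_mul_cancel₀ hvn]
      · rw [norm_smul, norm_inv, norm_norm, inv_mul_cancel₀ hfn]
      · show (‖f‖⁻¹ • f) ⬝ᵥ (‖v‖⁻¹ • v) = 0
        rw [smul_dotProduct, dotProduct_smul, hdot]
        simp
      · show (Quotient.mk projSetoid ⟨‖v‖⁻¹ • v, hv'⟩,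
          Quotient.mk projSetoid ⟨‖f‖⁻¹ • f, hf'⟩) =
          (Quotient.mk projSetoid ⟨v, hv⟩, Quotient.mk projSetoid ⟨f, hf⟩)
        refine Prod.ext ?_ ?_ <;> apply Quotient.sound
        · exact ⟨‖v‖, hvn, by rw [smul_smul, mul_inv_cancel₀ hvn, one_smul]⟩
        · exact ⟨‖f‖, hfn, by rw [smul_smul, mul_inv_cancel₀ hfn, one_smul]⟩
  rw [← himg2]
  exact hC'compact.image hFcont

instance : CompactSpace Flag3 := isCompact_iff_compactSpace.mp isCompact_flagSpace

/-! ### Linear algebra helpers -/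

lemma det_ne_zero_of_li {a b c : V3} (h : LinearIndependent ℝ ![a, b, c]) :
    Matrix.det ![a, b, c] ≠ 0 := by
  intro hdet
  have hdet' : (Matrix.of ![a, b, c])ᵀ.det = 0 := by
    rw [Matrix.det_transpose]; exact hdet
  obtain ⟨w, hw, hmv⟩ := (Matrix.exists_mulVec_eq_zero_iff).2 hdet'
  have hsum : ∀ j, ∑ i, w i * (![a, b, c] : Fin 3 → V3) i j = 0 := by
    intro j
    have h1 := congrFun hmv j
    simpa [Matrix.mulVec, dotProduct, Matrix.transpose_apply, mul_comm] using h1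
  have h2 := Fintype.linearIndependent_iff.1 h w (by
    funext j
    simpa [Finset.sum_apply, Pi.smul_apply, smul_eq_mul] using hsum j)
  exact hw (funext fun i => h2 i)

lemma li_rotate {a b c : V3} (h : LinearIndependent ℝ ![a, b, c]) :
    LinearIndependent ℝ ![c, a, b] := by
  have he : (![a, b, c] ∘ (![2, 0, 1] : Fin 3 → Fin 3)) = ![c, a, b] := by
    funext j; fin_cases j <;> rfl
  have hinj : Function.Injective (![2, 0, 1] : Fin 3 → Fin 3) := by decide
  have h2 := h.comp _ hinj
  rwa [he] at h2

lemma planeContains_of_dot {q : RP2 × RP2} (hmem : q ∈ FlagSpace) {f0 : V3} {h0 : f0 ≠ 0}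
    (hq : q.2 = RP2.mk f0 h0) {u : V3} (hu0 : f0 ⬝ᵥ u = 0) :
    planeContains ⟨q, hmem⟩ u := by
  intro f hf hx
  have h1 : RP2.mk f0 h0 = RP2.mk f hf := by rw [← hq]; exact hx
  obtain ⟨cc, hcc, rfl⟩ := RP2.mk_eq_mk_iff.1 h1
  rw [smul_dotProduct, hu0, smul_zero]

/-! ### Existence of a point outside all the tables -/

lemma PP.exists_avoid {d : ℕ} (P : PP d)
    (v : Fin d → Fin 3 → V3)
    (hli : ∀ i, LinearIndependent ℝ ![v i 0, v i 1, v i 2])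
    (hsubm : ∀ i, CβSpan (v i 1) (v i 2) ⊆ interior (P.S (i, false)))
    (hsubp : ∀ i, CβSpan (v i 0) (v i 1) ⊆ interior (P.S (i, true))) :
    ∃ x : Flag3, ∀ b, x ∉ P.S b := by
  by_contra hno
  push_neg at hno
  obtain ⟨b0, -⟩ := hno basePoint
  set i := b0.1 with hi
  have hli0 := hli i
  set a0 := v i 0 with ha0
  set a1 := v i 1 with ha1
  set a2 := v i 2 with ha2
  set f1 := crossProduct a1 a2 with hf1def
  set f2 := crossProduct a0 a1 with hf2def
  have hd1 : a0 ⬝ᵥ f1 ≠ 0 := by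
    rw [hf1def, triple_product_eq_det]
    exact det_ne_zero_of_li hli0
  have hd2 : a2 ⬝ᵥ f2 ≠ 0 := by
    rw [hf2def, triple_product_eq_det]
    exact det_ne_zero_of_li (li_rotate hli0)
  have h11 : f1 ⬝ᵥ a1 = 0 := by
    rw [dotProduct_comm, hf1def]; exact dot_self_cross _ _
  have h12 : f1 ⬝ᵥ a2 = 0 := by
    rw [dotProduct_comm, hf1def]; exact dot_cross_self _ _
  have h20 : f2 ⬝ᵥ a0 = 0 := by
    rw [dotProduct_comm, hf2def]; exact dot_self_cross _ _
  have h21 : f2 ⬝ᵥ a1 = 0 := by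
    rw [dotProduct_comm, hf2def]; exact dot_cross_self _ _
  have hind : ∀ s t : ℝ, s • f1 + t • f2 = 0 → s = 0 ∧ t = 0 := by
    intro s t hst
    have hs : s = 0 := by
      have h1 := congrArg (fun u : V3 => u ⬝ᵥ a0) hst
      simp only [add_dotProduct, smul_dotProduct, zero_dotProduct,
        smul_eq_mul, h20, mul_zero, add_zero] at h1
      rcases mul_eq_zero.1 h1 with h | h
      · exact h
      · exact absurd (by rwa [dotProduct_comm] at h) hd1
    refine ⟨hs, ?_⟩
    subst hs
    have h1 := congrArg (fun u : V3 => u ⬝ᵥ a2) hst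
    simp only [add_dotProduct, smul_dotProduct, zero_dotProduct,
      smul_eq_mul, h12, mul_zero, zero_smul, zero_add, zero_mul, add_zero] at h1
    rcases mul_eq_zero.1 h1 with h | h
    · exact h
    · exact absurd (by rwa [dotProduct_comm] at h) hd2
  have hvecne : ∀ p : ℝ × ℝ, p ≠ 0 → p.1 • f1 + p.2 • f2 ≠ 0 := by
    intro p hp h0
    obtain ⟨hs, ht⟩ := hind p.1 p.2 h0
    exact hp (Prod.ext hs ht)
  have hu1 : a1 ≠ 0 := li_ne_zero_1 hli0
  have hf1ne : f1 ≠ 0 := fun h => hd1 (by rw [h, dotProduct_zero])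
  have hf2ne : f2 ≠ 0 := fun h => hd2 (by rw [h, dotProduct_zero])
  have hflag : ∀ s t : ℝ, (s • f1 + t • f2) ⬝ᵥ a1 = 0 := by
    intro s t
    rw [add_dotProduct, smul_dotProduct, smul_dotProduct, h11, h21]
    simp
  set xm : Flag3 := ⟨(RP2.mk a1 hu1, RP2.mk f1 hf1ne),
    mem_flagSpace_mk hu1 hf1ne h11⟩ with hxm
  set xp : Flag3 := ⟨(RP2.mk a1 hu1, RP2.mk f2 hf2ne),
    mem_flagSpace_mk hu1 hf2ne h21⟩ with hxp
  have hxmA : xm ∈ interior (P.S (i, false)) := by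
    apply hsubm i
    exact ⟨planeContains_of_dot _ rfl h11, planeContains_of_dot _ rfl h12⟩
  have hxpB : xp ∈ interior (P.S (i, true)) := by
    apply hsubp i
    exact ⟨planeContains_of_dot _ rfl h20, planeContains_of_dot _ rfl h21⟩
  -- the connected circle of flags through xm and xp
  set θ : ({(0 : ℝ × ℝ)}ᶜ : Set (ℝ × ℝ)) → Flag3 := fun p =>
    ⟨(RP2.mk a1 hu1, RP2.mk (p.1.1 • f1 + p.1.2 • f2) (hvecne p.1 (Set.mem_compl_singleton_iff.mp p.2))),
      mem_flagSpace_mk _ _ (hflag _ _)⟩ with hθ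
  have hθcont : Continuous θ := by
    apply Continuous.subtype_mk
    refine Continuous.prodMk continuous_const ?_
    refine Continuous.comp continuous_quotient_mk' ?_
    apply Continuous.subtype_mk
    exact ((continuous_fst.comp continuous_subtype_val).smul continuous_const).add
      ((continuous_snd.comp continuous_subtype_val).smul continuous_const)
  haveI : PreconnectedSpace ({(0 : ℝ × ℝ)}ᶜ : Set (ℝ × ℝ)) := by
    apply Subtype.preconnectedSpace
    refine (isConnected_compl_singleton_of_one_lt_rank ?_ 0).isPreconnected
    rw [rank_prod', Module.rank_self]
    norm_num
  have hCrange : IsPreconnected (Set.range θ) := isPreconnected_range hθcont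
  have hxmRange : xm ∈ Set.range θ := by
    refine ⟨⟨(1, 0), by simp⟩, ?_⟩
    apply Subtype.ext
    refine Prod.ext rfl ?_
    show RP2.mk ((1 : ℝ) • f1 + (0 : ℝ) • f2) _ = RP2.mk f1 hf1ne
    exact RP2.mk_eq_mk_iff.2 ⟨1, one_ne_zero, by simp⟩
  have hxpRange : xp ∈ Set.range θ := by
    refine ⟨⟨(0, 1), by simp⟩, ?_⟩
    apply Subtype.ext
    refine Prod.ext rfl ?_
    show RP2.mk ((0 : ℝ) • f1 + (1 : ℝ) • f2) _ = RP2.mk f2 hf2ne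
    exact RP2.mk_eq_mk_iff.2 ⟨1, one_ne_zero, by simp⟩
  have hcov : (⋃ b, interior (P.S b)) = Set.univ := by
    have h1 : (⋃ b, P.S b) = Set.univ :=
      Set.eq_univ_of_forall fun y => (hno y).elim fun b hb => Set.mem_iUnion.2 ⟨b, hb⟩
    rw [← P.int_iUnion, h1, interior_univ]
  set A := interior (P.S (i, false)) with hA
  set B := ⋃ b : {b : Fin d × Bool // b ≠ (i, false)}, interior (P.S b.1) with hB
  have hAB : Set.range θ ⊆ A ∪ B := by
    intro x _
    have hx : x ∈ ⋃ b, interior (P.S b) := by rw [hcov]; trivial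
    obtain ⟨b, hb⟩ := Set.mem_iUnion.1 hx
    by_cases hbi : b = (i, false)
    · left; rwa [hbi] at hb
    · right; exact Set.mem_iUnion.2 ⟨⟨b, hbi⟩, hb⟩
  obtain ⟨y, -, hyA, hyB⟩ := hCrange A B isOpen_interior
    (isOpen_iUnion fun b => isOpen_interior) hAB ⟨xm, hxmRange, hxmA⟩
    ⟨xp, hxpRange, Set.mem_iUnion.2 ⟨⟨(i, true), by simp⟩, hxpB⟩⟩
  obtain ⟨⟨b, hbne⟩, hyb⟩ := Set.mem_iUnion.1 hyB
  exact Set.disjoint_left.1 (P.disj (i, false) b (Ne.symm hbne))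
    (interior_subset hyA) (interior_subset hyb)

end PingPongMachinery

/-- Proposition 3.6 / Corollary 3.9(1): ping-pong for Schottky subgroups of
`PGL(3,ℝ)` acting on the flag space. -/
theorem schottky_ping_pong (d : ℕ) (g : Fin d → GL3)
    (v : Fin d → Fin 3 → V3) (lam : Fin d → Fin 3 → ℝ)
    (hli : ∀ i, LinearIndependent ℝ ![v i 0, v i 1, v i 2])
    (heig : ∀ i k, (g i : Matrix (Fin 3) (Fin 3) ℝ) *ᵥ v i k = lam i k • v i k)
    (hlox : ∀ i, |lam i 0| > |lam i 1| ∧ |lam i 1| > |lam i 2| ∧ |lam i 2| > 0)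
    (Hm Hp : Fin d → Set Flag3)
    (hnem : ∀ i, (Hm i).Nonempty) (hnep : ∀ i, (Hp i).Nonempty)
    (hcm : ∀ i, IsCompact (Hm i)) (hcp : ∀ i, IsCompact (Hp i))
    (hregm : ∀ i, Hm i = closure (interior (Hm i)))
    (hregp : ∀ i, Hp i = closure (interior (Hp i)))
    (hdisj1 : ∀ i j, i ≠ j → Disjoint (Hm i) (Hm j))
    (hdisj2 : ∀ i j, i ≠ j → Disjoint (Hp i) (Hp j))
    (hdisj3 : ∀ i j, Disjoint (Hm i) (Hp j))
    (hBm : ∀ i, bouquetMinus (v i 1) (v i 2) (li_ne_zero_2 (hli i)) ⊆ interior (Hm i))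
    (hBp : ∀ i, bouquetPlus (v i 0) (v i 1) (li_ne_zero_0 (hli i)) ⊆ interior (Hp i))
    (hHp : ∀ i, Hp i = Set.univ \ interior (flagMap (g i) '' Hm i))
    (Γ : Subgroup (Flag3 ≃ₜ Flag3))
    (hΓ : Γ = Subgroup.closure (Set.range fun i => flagHomeo (g i)))
    (U Ω : Set Flag3) (hU : U = Set.univ \ ⋃ i, (Hm i ∪ Hp i))
    (hΩ : Ω = ⋃ γ ∈ Γ, (γ : Flag3 → Flag3) '' closure U) :
    Function.Injective
      (FreeGroup.lift (fun i => flagHomeo (g i)) : FreeGroup (Fin d) →* (Flag3 ≃ₜ Flag3)) ∧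
    IsOpen Ω ∧
    (∀ γ ∈ Γ, ∀ x ∈ Ω, (γ : Flag3 → Flag3) x ∈ Ω) ∧
    (∀ γ ∈ Γ, ∀ x ∈ Ω, (γ : Flag3 → Flag3) x = x → γ = 1) ∧
    (∀ K : Set Flag3, K ⊆ Ω → IsCompact K →
      {γ : Flag3 ≃ₜ Flag3 | γ ∈ Γ ∧ ((γ : Flag3 → Flag3) '' K ∩ K).Nonempty}.Finite) ∧
    IsCompact (closure U) := by
  classical
  set P : PP d := mkPP g Hm Hp hregm hregp hdisj1 hdisj2 hdisj3 hHp with hP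
  -- identification of the word action with the lifted free-group action
  have hliftmk : ∀ L : List (Fin d × Bool),
      (FreeGroup.lift (fun i => flagHomeo (g i))) (FreeGroup.mk L) = P.wH L := by
    intro L
    rw [FreeGroup.lift_mk, List.prod_eq_foldr, List.foldr_map]
    rfl
  have hcoe : ∀ u : FreeGroup (Fin d),
      ⇑(FreeGroup.lift (fun i => flagHomeo (g i)) u) = P.wA u.toWord := by
    intro u
    conv_lhs => rw [← FreeGroup.mk_toWord (x := u)]
    rw [hliftmk]
    rfl
  have hRange : Γ = (FreeGroup.lift (fun i => flagHomeo (g i))).range := by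
    rw [hΓ, ← FreeGroup.range_lift_eq_closure]
  have hUnion : (⋃ i, (Hm i ∪ Hp i)) = ⋃ a : Fin d × Bool, P.S a := by
    apply Set.Subset.antisymm
    · refine Set.iUnion_subset fun i x hx => ?_
      rcases hx with h | h
      · exact Set.mem_iUnion.2 ⟨(i, false), h⟩
      · exact Set.mem_iUnion.2 ⟨(i, true), h⟩
    · refine Set.iUnion_subset fun a x hx => ?_
      refine Set.mem_iUnion.2 ⟨a.1, ?_⟩
      cases a with
      | mk i b =>
        cases b
        · exact Or.inl hx
        · exact Or.inr hx
  have hclU : closure U = P.core := by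
    rw [hU, hUnion, ← Set.compl_eq_univ_diff]
    exact P.core_eq_closure.symm
  have hΩOm : Ω = P.Om := by
    rw [hΩ]
    apply Set.Subset.antisymm
    · refine Set.iUnion₂_subset fun γ hγ => ?_
      rw [hRange] at hγ
      obtain ⟨u, rfl⟩ := hγ
      rw [hclU, hcoe u]
      exact Set.subset_iUnion (fun w => P.wA w '' P.core) u.toWord
    · refine Set.iUnion_subset fun w => ?_
      have hmem : FreeGroup.lift (fun i => flagHomeo (g i)) (FreeGroup.mk w) ∈ Γ := by
        rw [hRange]; exact ⟨FreeGroup.mk w, rfl⟩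
      intro x hx
      refine Set.mem_iUnion₂.2 ⟨_, hmem, ?_⟩
      rw [hclU, hcoe (FreeGroup.mk w), FreeGroup.toWord_mk, ← P.wA_reduce]
      exact hx
  obtain ⟨x₀, hx₀⟩ : ∃ x : Flag3, ∀ b, x ∉ P.S b := by
    apply P.exists_avoid v hli
    · intro i
      exact Set.Subset.trans Set.subset_union_right (hBm i)
    · intro i
      exact Set.Subset.trans Set.subset_union_right (hBp i)
  refine ⟨?_, ?_, ?_, ?_, ?_, ?_⟩
  · -- injectivity of the lifted morphism
    rw [injective_iff_map_eq_one]
    intro u hu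
    by_contra hne
    have hL : u.toWord ≠ [] := fun h => hne (FreeGroup.toWord_eq_nil_iff.mp h)
    obtain ⟨a, T, hT⟩ : ∃ a T, u.toWord = a :: T := by
      cases hTw : u.toWord with
      | nil => exact absurd hTw hL
      | cons a T => exact ⟨a, T, rfl⟩
    have hred : RedW (a :: T) := hT ▸ PP.redW_toWord u
    have hhit := P.hit T a x₀ hred hx₀
    have happ : P.wA u.toWord x₀ = x₀ := by
      rw [← hcoe u, hu]
      rfl
    rw [hT] at happ
    rw [happ] at hhit
    exact hx₀ a hhit
  · -- Ω is open
    rw [hΩOm]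
    exact P.isOpen_Om
  · -- Ω is Γ-invariant
    intro γ hγ x hx
    rw [hΩ] at hx ⊢
    obtain ⟨δ, hδ, hxδ⟩ := Set.mem_iUnion₂.1 hx
    obtain ⟨u, huU, rfl⟩ := hxδ
    exact Set.mem_iUnion₂.2 ⟨γ * δ, mul_mem hγ hδ, ⟨u, huU, rfl⟩⟩
  · -- Γ acts freely on Ω
    intro γ hγ x hx hfix
    rw [hRange] at hγ
    obtain ⟨u, rfl⟩ := hγ
    by_cases hL : u.toWord = []
    · have h1 : u = 1 := FreeGroup.toWord_eq_nil_iff.mp hL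
      rw [h1]
      exact MonoidHom.map_one _
    · exfalso
      have hxOm : x ∈ P.Om := hΩOm ▸ hx
      rw [hcoe u] at hfix
      exact P.fix_aux u.toWord.length u.toWord x le_rfl (PP.redW_toWord u) hL hxOm hfix
  · -- proper discontinuity
    intro K hKsub hKc
    have hKOm : K ⊆ P.Om := hΩOm ▸ hKsub
    have hdisjI : K ∩ ⋂ n, P.Lam n = ∅ := by
      apply Set.eq_empty_iff_forall_notMem.2
      rintro x ⟨hx1, hx2⟩
      have hmk := hKOm hx1
      rw [P.Om_eq_compl] at hmk
      exact hmk hx2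
    obtain ⟨n0, hn0⟩ := hKc.elim_directed_family_closed (fun n => P.Lam n)
      (fun n => P.Lam_closed n) hdisjI
      (fun m n => ⟨max m n, P.Lam_anti (le_max_left m n), P.Lam_anti (le_max_right m n)⟩)
    set n := max n0 1 with hn
    have hn1 : 1 ≤ n := le_max_right _ _
    have hKn : K ∩ P.Lam n = ∅ := by
      apply Set.eq_empty_iff_forall_notMem.2
      rintro x ⟨hx1, hx2⟩
      rw [Set.eq_empty_iff_forall_notMem] at hn0
      exact hn0 x ⟨hx1, P.Lam_anti (le_max_left n0 1) hx2⟩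
    apply Set.Finite.subset (Set.Finite.image (FreeGroup.lift fun i => flagHomeo (g i))
      ((List.finite_length_le (Fin d × Bool) (2 * n)).preimage
        (FreeGroup.toWord_injective.injOn)))
    rintro γ ⟨hγΓ, hne⟩
    rw [hRange] at hγΓ
    obtain ⟨u, rfl⟩ := hγΓ
    refine ⟨u, ?_, rfl⟩
    show u.toWord.length ≤ 2 * n
    by_contra hlong
    push_neg at hlong
    obtain ⟨y, hy1, hy2⟩ := hne
    obtain ⟨x, hxK, hxy⟩ := hy1
    have hxy' : P.wA u.toWord x = y := by rw [← hcoe u]; exact hxy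
    rcases P.dich (PP.redW_toWord u) hn1 (le_of_lt hlong) with h | h
    · rw [Set.eq_empty_iff_forall_notMem] at hKn
      exact hKn x ⟨hxK, h⟩
    · rw [hxy'] at h
      have h2 : y ∈ P.Lam n := P.Lam_anti (by omega) h
      rw [Set.eq_empty_iff_forall_notMem] at hKn
      exact hKn y ⟨hy2, h2⟩
  · -- cocompactness: the closure of U is compact
    exact isClosed_closure.isCompact
end

section
/- Balanced dynamics on the flag space, repulsive part (Lemma 2.15, claims 1–3, diagonal case): Let a_n = diag(1, β_n, γ_n) ∈ GL(3,ℝ) with 0 < γ_n ≤ β_n ≤ 1 for all n, β_n → 0 and γ_n/β_n → 0, acting on the flag space X. For a flag x = ([v],[f]) ∈ X with v = (v₁,v₂,v₃) and f = [f₁:f₂:f₃]*: (1) if v₁ ≠ 0 and f₃ ≠ 0, then D_{(a_n)}(x) = {([e₁], [0:0:1]*)}; (2) if f₃ = 0 and v₁ ≠ 0, then D_{(a_n)}(x) = {([e₁],[g]) ∈ X : g(e₁) = 0} (the α-circle of [e₁]); (3) if v₁ = 0 and f₃ ≠ 0, then D_{(a_n)}(x) = {([w],[0:0:1]*) : w₃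 = 0} (the β-circle of the plane spanned by e₁,e₂). -/
open Matrix Filter Topology Set

noncomputable section Aux

open Matrix Filter Topology

/-! #### Basic RP2 topology lemmas -/

lemma tendsto_rp2_mk {u : ℕ → V3} {w : V3} (hu : ∀ n, u n ≠ 0) (hw : w ≠ 0)
    (h : Tendsto u atTop (𝓝 w)) :
    Tendsto (fun n => RP2.mk (u n) (hu n)) atTop (𝓝 (RP2.mk w hw)) := by
  have h1 : Tendsto (fun n => (⟨u n, hu n⟩ : {v : V3 // v ≠ 0})) atTop
      (𝓝 (⟨w, hw⟩ : {v : V3 // v ≠ 0})) := tendsto_subtype_rng.2 h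
  exact (continuous_quotient_mk'.tendsto _).comp h1

lemma RP2.mk_smul {v : V3} (hv : v ≠ 0) (c : ℝ) (hc : c ≠ 0) :
    RP2.mk (c • v) (smul_ne_zero hc hv) = RP2.mk v hv := by
  exact (RP2.mk_eq_mk_iff.2 ⟨c, hc, rfl⟩).symm

/-- Sum of squares of coordinates. -/
def sq3 (v : V3) : ℝ := v 0 * v 0 + v 1 * v 1 + v 2 * v 2

lemma sq3_pos {v : V3} (hv : v ≠ 0) : 0 < sq3 v := by
  rcases lt_or_eq_of_le (by unfold sq3; nlinarith [mul_self_nonneg (v 0), mul_self_nonneg (v 1), mul_self_nonneg (v 2)] : (0:ℝ) ≤ sq3 v) with h | h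
  · exact h
  exfalso
  apply hv
  have hle : sq3 v ≤ 0 := le_of_eq h.symm
  unfold sq3 at hle
  have e0 : v 0 * v 0 = 0 := le_antisymm (by nlinarith [mul_self_nonneg (v 1), mul_self_nonneg (v 2)]) (mul_self_nonneg _)
  have e1 : v 1 * v 1 = 0 := le_antisymm (by nlinarith [mul_self_nonneg (v 0), mul_self_nonneg (v 2)]) (mul_self_nonneg _)
  have e2 : v 2 * v 2 = 0 := le_antisymm (by nlinarith [mul_self_nonneg (v 0), mul_self_nonneg (v 1)]) (mul_self_nonneg _)
  funext j
  fin_cases j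
  · exact mul_self_eq_zero.1 e0
  · exact mul_self_eq_zero.1 e1
  · exact mul_self_eq_zero.1 e2

lemma sq3_smul (c : ℝ) (v : V3) : sq3 (c • v) = c ^ 2 * sq3 v := by
  unfold sq3; simp only [Pi.smul_apply, smul_eq_mul]; ring

/-- A separating continuous function on `RP2`. -/
def Fbar : RP2 → (Fin 3 → Fin 3 → ℝ) :=
  Quotient.lift (fun a : {v : V3 // v ≠ 0} => fun i j => a.1 i * a.1 j / sq3 a.1)
    (by
      rintro a b ⟨c, hc, h⟩
      funext i j
      have hsa := (sq3_pos a.2).ne'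
      show a.1 i * a.1 j / sq3 a.1 = b.1 i * b.1 j / sq3 b.1
      rw [h, sq3_smul]
      simp only [Pi.smul_apply, smul_eq_mul]
      rw [div_eq_div_iff hsa (mul_ne_zero (pow_ne_zero 2 hc) hsa)]
      ring)

lemma continuous_sq3 : Continuous sq3 := by
  unfold sq3
  fun_prop

lemma continuous_Fbar : Continuous Fbar := by
  apply Continuous.quotient_lift
  refine continuous_pi fun i => continuous_pi fun j => ?_
  have hc : ∀ k : Fin 3, Continuous fun a : {v : V3 // v ≠ 0} => a.1 k :=
    fun k => (continuous_apply k).comp continuous_subtype_val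
  exact ((hc i).mul (hc j)).div (continuous_sq3.comp continuous_subtype_val)
    (fun a => (sq3_pos a.2).ne')

lemma Fbar_injective : Function.Injective Fbar := by
  intro p q
  refine Quotient.inductionOn₂ p q ?_
  rintro ⟨a, ha⟩ ⟨b, hb⟩ h
  have hsa := sq3_pos ha
  have hsb := sq3_pos hb
  obtain ⟨i, hi⟩ := Function.ne_iff.1 ha
  have hi' : (0 : V3) i = 0 := rfl
  rw [hi'] at hi
  have key : ∀ j k : Fin 3, a j * a k / sq3 a = b j * b k / sq3 b := by
    intro j k
    have := congrFun (congrFun h j) k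
    exact this
  have hbi : b i ≠ 0 := by
    intro h0
    have h1 := key i i
    rw [h0] at h1
    have : a i * a i / sq3 a > 0 := div_pos (mul_self_pos.2 hi) hsa
    rw [h1] at this
    simp at this
  apply Quotient.sound
  refine ⟨sq3 b * a i / (sq3 a * b i), div_ne_zero (mul_ne_zero hsb.ne' hi) (mul_ne_zero hsa.ne' hbi), ?_⟩
  funext j
  have h1 := key i j
  show b j = (sq3 b * a i / (sq3 a * b i)) * a j
  field_simp at h1 ⊢
  nlinarith [h1]

lemma rp2_tendsto_unique {u : ℕ → RP2} {p q : RP2}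
    (hp : Tendsto u atTop (𝓝 p)) (hq : Tendsto u atTop (𝓝 q)) : p = q := by
  apply Fbar_injective
  exact tendsto_nhds_unique ((continuous_Fbar.tendsto p).comp hp)
    ((continuous_Fbar.tendsto q).comp hq)

end Aux
noncomputable section Aux2

open Matrix Filter Topology

/-- A unit-norm representative of a point of `RP2`. -/
def RP2.rep (p : RP2) : V3 := ‖(Quotient.out p).1‖⁻¹ • (Quotient.out p).1

lemma RP2.norm_out_ne (p : RP2) : ‖(Quotient.out p).1‖ ≠ 0 :=
  norm_ne_zero_iff.2 (Quotient.out p).2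

lemma RP2.rep_norm (p : RP2) : ‖RP2.rep p‖ = 1 := by
  unfold RP2.rep
  rw [norm_smul, norm_inv, norm_norm, inv_mul_cancel₀ (RP2.norm_out_ne p)]

lemma RP2.rep_ne (p : RP2) : RP2.rep p ≠ 0 := by
  intro h
  have := RP2.rep_norm p
  rw [h, norm_zero] at this
  norm_num at this

lemma RP2.mk_rep (p : RP2) : RP2.mk (RP2.rep p) (RP2.rep_ne p) = p := by
  have h1 : RP2.mk (Quotient.out p).1 (Quotient.out p).2 = p := by
    show Quotient.mk projSetoid ⟨(Quotient.out p).1, (Quotient.out p).2⟩ = p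
    rw [Subtype.coe_eta]
    exact Quotient.out_eq p
  conv_rhs => rw [← h1]
  exact RP2.mk_smul _ _ (inv_ne_zero (RP2.norm_out_ne p))

/-- Extraction of convergent unit-norm lifts along a subsequence. -/
lemma forward_extract (u : ℕ → Flag3) (x : Flag3) (v f : V3) (hv : v ≠ 0) (hf : f ≠ 0)
    (hx : (x : RP2 × RP2) = (RP2.mk v hv, RP2.mk f hf)) (hu : Tendsto u atTop (𝓝 x)) :
    ∃ ψ : ℕ → ℕ, StrictMono ψ ∧ ∃ w g : ℕ → V3, ∃ hw : ∀ k, w k ≠ 0, ∃ hg : ∀ k, g k ≠ 0,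
      (∀ k, (u (ψ k) : RP2 × RP2) = (RP2.mk (w k) (hw k), RP2.mk (g k) (hg k))) ∧
      ∃ c d : ℝ, c ≠ 0 ∧ d ≠ 0 ∧
        Tendsto w atTop (𝓝 (c • v)) ∧ Tendsto g atTop (𝓝 (d • f)) := by
  set w0 : ℕ → V3 := fun n => RP2.rep ((u n : RP2 × RP2).1) with hw0
  set g0 : ℕ → V3 := fun n => RP2.rep ((u n : RP2 × RP2).2) with hg0
  have hsph : ∀ n, w0 n ∈ Metric.sphere (0 : V3) 1 := fun n => by
    rw [mem_sphere_zero_iff_norm]; exact RP2.rep_norm _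
  have hsph' : ∀ n, g0 n ∈ Metric.sphere (0 : V3) 1 := fun n => by
    rw [mem_sphere_zero_iff_norm]; exact RP2.rep_norm _
  obtain ⟨W, hWmem, ψ₁, hψ₁, hW⟩ := (isCompact_sphere (0 : V3) 1).tendsto_subseq hsph
  obtain ⟨G, hGmem, ψ₂, hψ₂, hG⟩ := (isCompact_sphere (0 : V3) 1).tendsto_subseq
    (fun k => hsph' (ψ₁ k))
  refine ⟨ψ₁ ∘ ψ₂, hψ₁.comp hψ₂, fun k => w0 (ψ₁ (ψ₂ k)), fun k => g0 (ψ₁ (ψ₂ k)),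
    fun k => RP2.rep_ne _, fun k => RP2.rep_ne _, fun k => ?_, ?_⟩
  · ext1
    · exact (RP2.mk_rep _).symm
    · exact (RP2.mk_rep _).symm
  · have hWne : W ≠ 0 := by
      intro h; rw [h] at hWmem; simp [mem_sphere_zero_iff_norm] at hWmem
    have hGne : G ≠ 0 := by
      intro h; rw [h] at hGmem; simp [mem_sphere_zero_iff_norm] at hGmem
    have hWlim : Tendsto (fun k => w0 (ψ₁ (ψ₂ k))) atTop (𝓝 W) :=
      hW.comp hψ₂.tendsto_atTop
    have hGlim : Tendsto (fun k => g0 (ψ₁ (ψ₂ k))) atTop (𝓝 G) := hG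
    -- identify [W] = [v]
    have hmkW : RP2.mk W hWne = RP2.mk v hv := by
      have l1 : Tendsto (fun k => RP2.mk (w0 (ψ₁ (ψ₂ k))) (RP2.rep_ne _)) atTop
          (𝓝 (RP2.mk W hWne)) := tendsto_rp2_mk _ hWne hWlim
      have l2 : (fun k => RP2.mk (w0 (ψ₁ (ψ₂ k))) (RP2.rep_ne _)) =
          fun k => (u (ψ₁ (ψ₂ k)) : RP2 × RP2).1 := by
        funext k; exact RP2.mk_rep _
      have l3 : Tendsto (fun k => (u (ψ₁ (ψ₂ k)) : RP2 × RP2).1) atTop (𝓝 (RP2.mk v hv)) := by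
        have : Tendsto (fun z : Flag3 => (z : RP2 × RP2).1) (𝓝 x) (𝓝 (RP2.mk v hv)) := by
          rw [← show (x : RP2 × RP2).1 = RP2.mk v hv by rw [hx]]
          exact ((continuous_fst.comp continuous_subtype_val).tendsto x)
        exact this.comp (hu.comp (hψ₁.comp hψ₂).tendsto_atTop)
      rw [l2] at l1
      exact rp2_tendsto_unique l1 l3
    have hmkG : RP2.mk G hGne = RP2.mk f hf := by
      have l1 : Tendsto (fun k => RP2.mk (g0 (ψ₁ (ψ₂ k))) (RP2.rep_ne _)) atTop
          (𝓝 (RP2.mk G hGne)) := tendsto_rp2_mk _ hGne hGlim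
      have l2 : (fun k => RP2.mk (g0 (ψ₁ (ψ₂ k))) (RP2.rep_ne _)) =
          fun k => (u (ψ₁ (ψ₂ k)) : RP2 × RP2).2 := by
        funext k; exact RP2.mk_rep _
      have l3 : Tendsto (fun k => (u (ψ₁ (ψ₂ k)) : RP2 × RP2).2) atTop (𝓝 (RP2.mk f hf)) := by
        have : Tendsto (fun z : Flag3 => (z : RP2 × RP2).2) (𝓝 x) (𝓝 (RP2.mk f hf)) := by
          rw [← show (x : RP2 × RP2).2 = RP2.mk f hf by rw [hx]]
          exact ((continuous_snd.comp continuous_subtype_val).tendsto x)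
        exact this.comp (hu.comp (hψ₁.comp hψ₂).tendsto_atTop)
      rw [l2] at l1
      exact rp2_tendsto_unique l1 l3
    obtain ⟨c, hc, hcW⟩ := RP2.mk_eq_mk_iff.1 hmkW.symm
    obtain ⟨d, hd, hdG⟩ := RP2.mk_eq_mk_iff.1 hmkG.symm
    exact ⟨c, d, hc, hd, hcW ▸ hWlim, hdG ▸ hGlim⟩

end Aux2
noncomputable section Aux3

open Matrix Filter Topology

variable {β γ : ℕ → ℝ} {A : ℕ → GL3}

lemma A_mulVec (hA : ∀ n, (A n : Matrix (Fin 3) (Fin 3) ℝ) = Matrix.diagonal ![1, β n, γ n])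
    (n : ℕ) (w : V3) :
    (A n : Matrix (Fin 3) (Fin 3) ℝ) *ᵥ w = ![w 0, β n * w 1, γ n * w 2] := by
  rw [hA n]
  funext i
  fin_cases i <;> simp [Matrix.mulVec_diagonal]

lemma dualA_coe (hpos : ∀ n, 0 < γ n ∧ γ n ≤ β n ∧ β n ≤ 1)
    (hA : ∀ n, (A n : Matrix (Fin 3) (Fin 3) ℝ) = Matrix.diagonal ![1, β n, γ n]) (n : ℕ) :
    ((dualGL (A n) : GL3) : Matrix (Fin 3) (Fin 3) ℝ) =
      Matrix.diagonal ![1, (β n)⁻¹, (γ n)⁻¹] := by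
  have hβ : β n ≠ 0 := (lt_of_lt_of_le (hpos n).1 (hpos n).2.1).ne'
  have hγ : γ n ≠ 0 := (hpos n).1.ne'
  have hmul : Matrix.diagonal ![1, (β n)⁻¹, (γ n)⁻¹] * (A n : Matrix (Fin 3) (Fin 3) ℝ) = 1 := by
    have hvec : (fun i => ![1, (β n)⁻¹, (γ n)⁻¹] i * ![1, β n, γ n] i : Fin 3 → ℝ) = 1 := by
      funext i
      fin_cases i <;> simp [inv_mul_cancel₀ hβ, inv_mul_cancel₀ hγ]
    rw [hA n, Matrix.diagonal_mul_diagonal, hvec]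
    exact Matrix.diagonal_one
  have hinv : (((A n)⁻¹ : GL3) : Matrix (Fin 3) (Fin 3) ℝ) =
      Matrix.diagonal ![1, (β n)⁻¹, (γ n)⁻¹] := by
    calc (((A n)⁻¹ : GL3) : Matrix (Fin 3) (Fin 3) ℝ)
        = 1 * (((A n)⁻¹ : GL3) : Matrix (Fin 3) (Fin 3) ℝ) := (one_mul _).symm
      _ = Matrix.diagonal ![1, (β n)⁻¹, (γ n)⁻¹] *
          ((A n : Matrix (Fin 3) (Fin 3) ℝ) * (((A n)⁻¹ : GL3) : Matrix (Fin 3) (Fin 3) ℝ)) := by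
          rw [← hmul]; rw [Matrix.mul_assoc]
      _ = Matrix.diagonal ![1, (β n)⁻¹, (γ n)⁻¹] := by
          rw [← Units.val_mul, mul_inv_cancel, Units.val_one, mul_one]
  show (((A n)⁻¹ : GL3) : Matrix (Fin 3) (Fin 3) ℝ)ᵀ = _
  rw [hinv, Matrix.diagonal_transpose]

lemma dualA_mulVec (hpos : ∀ n, 0 < γ n ∧ γ n ≤ β n ∧ β n ≤ 1)
    (hA : ∀ n, (A n : Matrix (Fin 3) (Fin 3) ℝ) = Matrix.diagonal ![1, β n, γ n]) (n : ℕ)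
    (g : V3) :
    ((dualGL (A n) : GL3) : Matrix (Fin 3) (Fin 3) ℝ) *ᵥ g =
      ![g 0, (β n)⁻¹ * g 1, (γ n)⁻¹ * g 2] := by
  rw [dualA_coe hpos hA n]
  funext i
  fin_cases i <;> simp [Matrix.mulVec_diagonal]

/-- Convergence of points to `[e₁]` under the dynamics, when the limit's first
coordinate is nonzero. -/
lemma point_tendsto (hpos : ∀ n, 0 < γ n ∧ γ n ≤ β n ∧ β n ≤ 1)
    (hA : ∀ n, (A n : Matrix (Fin 3) (Fin 3) ℝ) = Matrix.diagonal ![1, β n, γ n])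
    (m : ℕ → ℕ) (hmβ : Tendsto (fun k => β (m k)) atTop (𝓝 0))
    (w : ℕ → V3) (W : V3) (hW : Tendsto w atTop (𝓝 W)) (hW0 : W 0 ≠ 0)
    (hwk : ∀ k, w k ≠ 0) :
    Tendsto (fun k => RP2.mk ((A (m k) : Matrix (Fin 3) (Fin 3) ℝ) *ᵥ w k)
      (GL3.mulVec_ne (hwk k))) atTop (𝓝 (RP2.mk ![1, 0, 0] e1_ne)) := by
  have hmγ : Tendsto (fun k => γ (m k)) atTop (𝓝 0) :=
    squeeze_zero (fun k => (hpos (m k)).1.le) (fun k => (hpos (m k)).2.1) hmβ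
  have hL : (![W 0, 0, 0] : V3) ≠ 0 := ne_zero_of_coord 0 (by simpa using hW0)
  have hlim : Tendsto (fun k => (A (m k) : Matrix (Fin 3) (Fin 3) ℝ) *ᵥ w k) atTop
      (𝓝 ![W 0, 0, 0]) := by
    rw [tendsto_pi_nhds]
    intro i
    have hw0 : Tendsto (fun k => w k 0) atTop (𝓝 (W 0)) :=
      ((continuous_apply (0 : Fin 3)).tendsto W).comp hW
    have hw1 : Tendsto (fun k => w k 1) atTop (𝓝 (W 1)) :=
      ((continuous_apply (1 : Fin 3)).tendsto W).comp hW
    have hw2 : Tendsto (fun k => w k 2) atTop (𝓝 (W 2)) :=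
      ((continuous_apply (2 : Fin 3)).tendsto W).comp hW
    fin_cases i
    · simpa [A_mulVec hA] using hw0
    · have := hmβ.mul hw1
      rw [zero_mul] at this
      simpa [A_mulVec hA] using this
    · have := hmγ.mul hw2
      rw [zero_mul] at this
      simpa [A_mulVec hA] using this
  have h1 := tendsto_rp2_mk (fun k => GL3.mulVec_ne (hwk k)) hL hlim
  have h2 : RP2.mk ![W 0, 0, 0] hL = RP2.mk ![1, 0, 0] e1_ne := by
    rw [RP2.mk_eq_mk_iff]
    refine ⟨(W 0)⁻¹, inv_ne_zero hW0, ?_⟩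
    funext i
    fin_cases i <;> simp [inv_mul_cancel₀ hW0]
  rwa [h2] at h1

/-- Convergence of planes to `[e₃*]` under the dynamics, when the limit's last
coordinate is nonzero. -/
lemma dual_tendsto (hpos : ∀ n, 0 < γ n ∧ γ n ≤ β n ∧ β n ≤ 1)
    (hA : ∀ n, (A n : Matrix (Fin 3) (Fin 3) ℝ) = Matrix.diagonal ![1, β n, γ n])
    (m : ℕ → ℕ) (hmβ : Tendsto (fun k => β (m k)) atTop (𝓝 0))
    (hmr : Tendsto (fun k => γ (m k) / β (m k)) atTop (𝓝 0))
    (g : ℕ → V3) (G : V3) (hG : Tendsto g atTop (𝓝 G)) (hG2 : G 2 ≠ 0)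
    (hgk : ∀ k, g k ≠ 0) :
    Tendsto (fun k => RP2.mk (((dualGL (A (m k)) : GL3) : Matrix (Fin 3) (Fin 3) ℝ) *ᵥ g k)
      (GL3.mulVec_ne (hgk k))) atTop (𝓝 (RP2.mk ![0, 0, 1] e3_ne)) := by
  have hmγ : Tendsto (fun k => γ (m k)) atTop (𝓝 0) :=
    squeeze_zero (fun k => (hpos (m k)).1.le) (fun k => (hpos (m k)).2.1) hmβ
  have hβne : ∀ n, β n ≠ 0 := fun n => (lt_of_lt_of_le (hpos n).1 (hpos n).2.1).ne'
  have hγne : ∀ n, γ n ≠ 0 := fun n => (hpos n).1.ne'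
  have hscaled : ∀ k, γ (m k) • (((dualGL (A (m k)) : GL3) : Matrix (Fin 3) (Fin 3) ℝ) *ᵥ g k)
      = ![γ (m k) * g k 0, (γ (m k) / β (m k)) * g k 1, g k 2] := by
    intro k
    rw [dualA_mulVec hpos hA]
    funext i
    fin_cases i <;> simp [div_eq_mul_inv] <;> field_simp [hβne (m k), hγne (m k)]
  have hL : (![0, 0, G 2] : V3) ≠ 0 := ne_zero_of_coord 2 (by simpa using hG2)
  have heq : (fun k => RP2.mk (((dualGL (A (m k)) : GL3) : Matrix (Fin 3) (Fin 3) ℝ) *ᵥ g k)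
      (GL3.mulVec_ne (hgk k))) = fun k =>
      RP2.mk (γ (m k) • (((dualGL (A (m k)) : GL3) : Matrix (Fin 3) (Fin 3) ℝ) *ᵥ g k))
        (smul_ne_zero (hγne (m k)) (GL3.mulVec_ne (hgk k))) := by
    funext k
    exact (RP2.mk_smul _ _ (hγne (m k))).symm
  rw [heq]
  have hlim : Tendsto (fun k => γ (m k) •
      (((dualGL (A (m k)) : GL3) : Matrix (Fin 3) (Fin 3) ℝ) *ᵥ g k)) atTop
      (𝓝 ![0, 0, G 2]) := by
    simp only [hscaled]
    rw [tendsto_pi_nhds]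
    intro i
    have hg0 : Tendsto (fun k => g k 0) atTop (𝓝 (G 0)) :=
      ((continuous_apply (0 : Fin 3)).tendsto G).comp hG
    have hg1 : Tendsto (fun k => g k 1) atTop (𝓝 (G 1)) :=
      ((continuous_apply (1 : Fin 3)).tendsto G).comp hG
    have hg2 : Tendsto (fun k => g k 2) atTop (𝓝 (G 2)) :=
      ((continuous_apply (2 : Fin 3)).tendsto G).comp hG
    fin_cases i
    · have := hmγ.mul hg0
      rw [zero_mul] at this
      simpa using this
    · have := hmr.mul hg1
      rw [zero_mul] at this
      simpa using this
    · simpa using hg2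
  have h2 : RP2.mk ![0, 0, G 2] hL = RP2.mk ![0, 0, 1] e3_ne := by
    rw [RP2.mk_eq_mk_iff]
    refine ⟨(G 2)⁻¹, inv_ne_zero hG2, ?_⟩
    funext i
    fin_cases i <;> simp [inv_mul_cancel₀ hG2]
  rw [← h2]
  exact tendsto_rp2_mk (fun k => smul_ne_zero (hγne (m k)) (GL3.mulVec_ne (hgk k))) hL hlim

end Aux3
noncomputable section Aux4

open Matrix Filter Topology

variable {β γ : ℕ → ℝ} {A : ℕ → GL3}

lemma forward_point_lemma (hpos : ∀ n, 0 < γ n ∧ γ n ≤ β n ∧ β n ≤ 1)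
    (hA : ∀ n, (A n : Matrix (Fin 3) (Fin 3) ℝ) = Matrix.diagonal ![1, β n, γ n])
    (hβ : Tendsto β atTop (𝓝 0))
    (v f : V3) (hv : v ≠ 0) (hf : f ≠ 0) (x : Flag3)
    (hx : (x : RP2 × RP2) = (RP2.mk v hv, RP2.mk f hf)) (hv0 : v 0 ≠ 0) :
    ∀ y ∈ DynSet (fun n => flagMap (A n)) x,
      (y : RP2 × RP2).1 = RP2.mk ![1, 0, 0] e1_ne := by
  intro y hy
  obtain ⟨φ, hφ, u, hu, himg⟩ := hy
  obtain ⟨ψ, hψ, w, g, hw, hg, hval, c, d, hc, hd, hwlim, hglim⟩ :=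
    forward_extract u x v f hv hf hx hu
  have himg2 : Tendsto (fun k => flagMap (A (φ (ψ k))) (u (ψ k))) atTop (𝓝 y) :=
    himg.comp hψ.tendsto_atTop
  have hcomp : Tendsto (fun k => (flagMap (A (φ (ψ k))) (u (ψ k)) : RP2 × RP2).1) atTop
      (𝓝 ((y : RP2 × RP2).1)) :=
    ((continuous_fst.comp continuous_subtype_val).tendsto y).comp himg2
  have heq : (fun k => (flagMap (A (φ (ψ k))) (u (ψ k)) : RP2 × RP2).1) =
      fun k => RP2.mk ((A (φ (ψ k)) : Matrix (Fin 3) (Fin 3) ℝ) *ᵥ w k)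
        (GL3.mulVec_ne (hw k)) := by
    funext k
    have h1 : ((u (ψ k)) : RP2 × RP2).1 = RP2.mk (w k) (hw k) := by rw [hval k]
    show RP2.mapMat (A (φ (ψ k))) ((u (ψ k) : RP2 × RP2).1) = _
    rw [h1, RP2.mapMat_mk]
  rw [heq] at hcomp
  have hW0 : (c • v) 0 ≠ 0 := by
    show c * v 0 ≠ 0
    exact mul_ne_zero hc hv0
  have hmβ : Tendsto (fun k => β (φ (ψ k))) atTop (𝓝 0) :=
    hβ.comp ((hφ.comp hψ).tendsto_atTop)
  exact rp2_tendsto_unique hcomp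
    (point_tendsto hpos hA (fun k => φ (ψ k)) hmβ w (c • v) hwlim hW0 hw)

lemma forward_dual_lemma (hpos : ∀ n, 0 < γ n ∧ γ n ≤ β n ∧ β n ≤ 1)
    (hA : ∀ n, (A n : Matrix (Fin 3) (Fin 3) ℝ) = Matrix.diagonal ![1, β n, γ n])
    (hβ : Tendsto β atTop (𝓝 0))
    (hratio : Tendsto (fun n => γ n / β n) atTop (𝓝 0))
    (v f : V3) (hv : v ≠ 0) (hf : f ≠ 0) (x : Flag3)
    (hx : (x : RP2 × RP2) = (RP2.mk v hv, RP2.mk f hf)) (hf2 : f 2 ≠ 0) :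
    ∀ y ∈ DynSet (fun n => flagMap (A n)) x,
      (y : RP2 × RP2).2 = RP2.mk ![0, 0, 1] e3_ne := by
  intro y hy
  obtain ⟨φ, hφ, u, hu, himg⟩ := hy
  obtain ⟨ψ, hψ, w, g, hw, hg, hval, c, d, hc, hd, hwlim, hglim⟩ :=
    forward_extract u x v f hv hf hx hu
  have himg2 : Tendsto (fun k => flagMap (A (φ (ψ k))) (u (ψ k))) atTop (𝓝 y) :=
    himg.comp hψ.tendsto_atTop
  have hcomp : Tendsto (fun k => (flagMap (A (φ (ψ k))) (u (ψ k)) : RP2 × RP2).2) atTop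
      (𝓝 ((y : RP2 × RP2).2)) :=
    ((continuous_snd.comp continuous_subtype_val).tendsto y).comp himg2
  have heq : (fun k => (flagMap (A (φ (ψ k))) (u (ψ k)) : RP2 × RP2).2) =
      fun k => RP2.mk (((dualGL (A (φ (ψ k))) : GL3) : Matrix (Fin 3) (Fin 3) ℝ) *ᵥ g k)
        (GL3.mulVec_ne (hg k)) := by
    funext k
    have h1 : ((u (ψ k)) : RP2 × RP2).2 = RP2.mk (g k) (hg k) := by rw [hval k]
    show RP2.mapMat (dualGL (A (φ (ψ k)))) ((u (ψ k) : RP2 × RP2).2) = _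
    rw [h1, RP2.mapMat_mk]
  rw [heq] at hcomp
  have hG2 : (d • f) 2 ≠ 0 := by
    show d * f 2 ≠ 0
    exact mul_ne_zero hd hf2
  have hmβ : Tendsto (fun k => β (φ (ψ k))) atTop (𝓝 0) :=
    hβ.comp ((hφ.comp hψ).tendsto_atTop)
  have hmr : Tendsto (fun k => γ (φ (ψ k)) / β (φ (ψ k))) atTop (𝓝 0) :=
    hratio.comp ((hφ.comp hψ).tendsto_atTop)
  exact rp2_tendsto_unique hcomp
    (dual_tendsto hpos hA (fun k => φ (ψ k)) hmβ hmr g (d • f) hglim hG2 hg)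

end Aux4
noncomputable section Aux5

open Matrix Filter Topology

variable {β γ : ℕ → ℝ} {A : ℕ → GL3}

lemma backward_const (hpos : ∀ n, 0 < γ n ∧ γ n ≤ β n ∧ β n ≤ 1)
    (hA : ∀ n, (A n : Matrix (Fin 3) (Fin 3) ℝ) = Matrix.diagonal ![1, β n, γ n])
    (hβ : Tendsto β atTop (𝓝 0))
    (hratio : Tendsto (fun n => γ n / β n) atTop (𝓝 0))
    (v f : V3) (hv : v ≠ 0) (hf : f ≠ 0) (x : Flag3)
    (hx : (x : RP2 × RP2) = (RP2.mk v hv, RP2.mk f hf)) (hv0 : v 0 ≠ 0) (hf2 : f 2 ≠ 0)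
    (y : Flag3)
    (hy : (y : RP2 × RP2) = (RP2.mk ![1, 0, 0] e1_ne, RP2.mk ![0, 0, 1] e3_ne)) :
    y ∈ DynSet (fun n => flagMap (A n)) x := by
  refine ⟨id, strictMono_id, fun _ => x, tendsto_const_nhds, ?_⟩
  show Tendsto (fun k => flagMap (A k) x) atTop (𝓝 y)
  rw [tendsto_subtype_rng, hy]
  have hx1 : (x : RP2 × RP2).1 = RP2.mk v hv := by rw [hx]
  have hx2 : (x : RP2 × RP2).2 = RP2.mk f hf := by rw [hx]
  have hpt := point_tendsto hpos hA id hβ (fun _ => v) v tendsto_const_nhds hv0 (fun _ => hv)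
  have hdual := dual_tendsto hpos hA id hβ hratio (fun _ => f) f tendsto_const_nhds hf2
    (fun _ => hf)
  have heq : (fun k : ℕ => ((flagMap (A k) x) : RP2 × RP2)) = fun k =>
      (RP2.mk ((A k : Matrix (Fin 3) (Fin 3) ℝ) *ᵥ v) (GL3.mulVec_ne hv),
       RP2.mk (((dualGL (A k) : GL3) : Matrix (Fin 3) (Fin 3) ℝ) *ᵥ f) (GL3.mulVec_ne hf)) := by
    funext k
    show (RP2.mapMat (A k) (x : RP2 × RP2).1, RP2.mapMat (dualGL (A k)) (x : RP2 × RP2).2) = _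
    rw [hx1, hx2, RP2.mapMat_mk, RP2.mapMat_mk]
  rw [heq]
  exact hpt.prodMk_nhds hdual

lemma claim2_backward (hpos : ∀ n, 0 < γ n ∧ γ n ≤ β n ∧ β n ≤ 1)
    (hA : ∀ n, (A n : Matrix (Fin 3) (Fin 3) ℝ) = Matrix.diagonal ![1, β n, γ n])
    (hβ : Tendsto β atTop (𝓝 0))
    (hratio : Tendsto (fun n => γ n / β n) atTop (𝓝 0))
    (v f : V3) (hv : v ≠ 0) (hf : f ≠ 0) (x : Flag3)
    (hx : (x : RP2 × RP2) = (RP2.mk v hv, RP2.mk f hf)) (hv0 : v 0 ≠ 0) (hf2 : f 2 = 0)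
    (y : Flag3) (hy : (y : RP2 × RP2).1 = RP2.mk ![1, 0, 0] e1_ne) :
    y ∈ DynSet (fun n => flagMap (A n)) x := by
  have hβpos : ∀ n, 0 < β n := fun n => lt_of_lt_of_le (hpos n).1 (hpos n).2.1
  have hβne : ∀ n, β n ≠ 0 := fun n => (hβpos n).ne'
  have hγne : ∀ n, γ n ≠ 0 := fun n => (hpos n).1.ne'
  have hfv : f ⬝ᵥ v = 0 := x.2 v f hv hf (by rw [hx]) (by rw [hx])
  have hfv' : f 0 * v 0 + f 1 * v 1 + f 2 * v 2 = 0 := by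
    simpa [dotProduct, Fin.sum_univ_three] using hfv
  have hf1 : f 1 ≠ 0 := by
    intro h1
    have hf00 : f 0 * v 0 = 0 := by rw [h1, hf2] at hfv'; linarith
    have hf0 : f 0 = 0 := by
      rcases mul_eq_zero.1 hf00 with h | h
      · exact h
      · exact absurd h hv0
    apply hf
    funext i
    fin_cases i
    · exact hf0
    · exact h1
    · exact hf2
  set g := RP2.rep ((y : RP2 × RP2).2) with hgdef
  have hgne : g ≠ 0 := RP2.rep_ne _
  have hyg : (y : RP2 × RP2).2 = RP2.mk g hgne := (RP2.mk_rep _).symm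
  have hg0 : g 0 = 0 := by
    have := y.2 ![1, 0, 0] g e1_ne hgne hy hyg
    simpa [dotProduct, Fin.sum_univ_three] using this
  set S : ℝ := (f 1 / g 1) * g 2 with hS
  set ε : ℕ → ℝ := fun n => if g 1 = 0 then Real.sqrt (γ n / β n) else (γ n / β n) * S with hε
  have hε0 : Tendsto ε atTop (𝓝 0) := by
    by_cases hg1 : g 1 = 0
    · simp only [hε, if_pos hg1]
      have := (Real.continuous_sqrt.tendsto 0).comp hratio
      rwa [Real.sqrt_zero] at this
    · simp only [hε, if_neg hg1]
      have := hratio.mul_const S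
      rwa [zero_mul] at this
  set w : ℕ → V3 := fun n => v - (ε n * v 2 / f 1) • ![0, 1, 0] with hwdef
  set h' : ℕ → V3 := fun n => ![f 0, f 1, ε n] with hhdef
  have hw0 : ∀ n, w n 0 = v 0 := fun n => by simp [hwdef, Matrix.vecHead, Matrix.vecTail]
  have hw1 : ∀ n, w n 1 = v 1 - ε n * v 2 / f 1 := fun n => by simp [hwdef, Matrix.vecHead, Matrix.vecTail]
  have hw2 : ∀ n, w n 2 = v 2 := fun n => by simp [hwdef, Matrix.vecHead, Matrix.vecTail]
  have hwne : ∀ n, w n ≠ 0 := fun n => ne_zero_of_coord 0 (by rw [hw0 n]; exact hv0)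
  have hhne : ∀ n, h' n ≠ 0 := fun n => ne_zero_of_coord 1 (by simp [hhdef]; exact hf1)
  have hflag : ∀ n, h' n ⬝ᵥ w n = 0 := by
    intro n
    have e0 : h' n 0 = f 0 := by simp [hhdef]
    have e1 : h' n 1 = f 1 := by simp [hhdef]
    have e2 : h' n 2 = ε n := by simp [hhdef]
    rw [show h' n ⬝ᵥ w n = h' n 0 * w n 0 + h' n 1 * w n 1 + h' n 2 * w n 2 from by
      simp [dotProduct, Fin.sum_univ_three]]
    rw [e0, e1, e2, hw0, hw1, hw2]
    have hprod : f 1 * (v 1 - ε n * v 2 / f 1) = f 1 * v 1 - ε n * v 2 := by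
      field_simp
      try ring
    rw [hprod]
    have hfv'' : f 0 * v 0 + f 1 * v 1 = 0 := by rw [hf2] at hfv'; linarith
    linarith
  set u' : ℕ → Flag3 := fun n =>
    ⟨(RP2.mk (w n) (hwne n), RP2.mk (h' n) (hhne n)),
      mem_flagSpace_mk (hwne n) (hhne n) (hflag n)⟩ with hu'
  have hwlim : Tendsto w atTop (𝓝 v) := by
    have hcoef : Tendsto (fun n => ε n * v 2 / f 1) atTop (𝓝 0) := by
      have h := (hε0.mul_const (v 2)).div_const (f 1)
      rw [zero_mul, zero_div] at h
      exact h
    have h2 : Tendsto (fun n => (ε n * v 2 / f 1) • (![0, 1, 0] : V3)) atTop (𝓝 0) := by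
      have := hcoef.smul_const (![0, 1, 0] : V3)
      rwa [zero_smul] at this
    have h3 := Tendsto.sub (tendsto_const_nhds : Tendsto (fun _ : ℕ => v) atTop (𝓝 v)) h2
    rw [sub_zero] at h3
    exact h3
  have hhlim : Tendsto h' atTop (𝓝 f) := by
    rw [tendsto_pi_nhds]
    intro i
    fin_cases i
    · simpa [hhdef] using (tendsto_const_nhds : Tendsto (fun _ : ℕ => f 0) atTop (𝓝 (f 0)))
    · simpa [hhdef] using (tendsto_const_nhds : Tendsto (fun _ : ℕ => f 1) atTop (𝓝 (f 1)))
    · simpa [hhdef, hf2] using hε0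
  have hux : Tendsto u' atTop (𝓝 x) := by
    rw [tendsto_subtype_rng, hx]
    exact (tendsto_rp2_mk hwne hv hwlim).prodMk_nhds (tendsto_rp2_mk hhne hf hhlim)
  have hpt := point_tendsto hpos hA id hβ w v hwlim hv0 hwne
  have hdual : Tendsto (fun k => RP2.mk
      (((dualGL (A k) : GL3) : Matrix (Fin 3) (Fin 3) ℝ) *ᵥ h' k) (GL3.mulVec_ne (hhne k)))
      atTop (𝓝 (RP2.mk g hgne)) := by
    by_cases hg1 : g 1 = 0
    · -- target plane is [e₃*]
      have hg2 : g 2 ≠ 0 := by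
        intro h2
        apply hgne
        funext i
        fin_cases i
        · exact hg0
        · exact hg1
        · exact h2
      set st : ℕ → ℝ := fun n => Real.sqrt (γ n / β n) with hst
      have hstpos : ∀ n, 0 < st n :=
        fun n => Real.sqrt_pos.2 (div_pos (hpos n).1 (hβpos n))
      have hstsq : ∀ n, st n * st n = γ n / β n :=
        fun n => Real.mul_self_sqrt (le_of_lt (div_pos (hpos n).1 (hβpos n)))
      have hst0 : Tendsto st atTop (𝓝 0) := by
        have := (Real.continuous_sqrt.tendsto 0).comp hratio
        rwa [Real.sqrt_zero] at this
      have hσeq : ∀ n, γ n / st n = β n * st n := by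
        intro n
        rw [div_eq_iff (hstpos n).ne', mul_assoc, hstsq n]
        field_simp [hβne n]
      have hσne : ∀ n, γ n / st n ≠ 0 := fun n => div_ne_zero (hγne n) (hstpos n).ne'
      have hvec : ∀ n, (γ n / st n) •
          (((dualGL (A n) : GL3) : Matrix (Fin 3) (Fin 3) ℝ) *ᵥ h' n)
          = ![(γ n / st n) * f 0, st n * f 1, 1] := by
        intro n
        rw [dualA_mulVec hpos hA]
        have hεn : ε n = st n := by simp [hε, hg1, hst]
        funext i
        fin_cases i
        · simp [hhdef]
        · simp only [hhdef]
          simp only [Pi.smul_apply, smul_eq_mul, Fin.mk_one, Matrix.cons_val_one, Matrix.head_cons,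
            Matrix.cons_val_zero]
          rw [hσeq n]
          field_simp [hβne n]
          try ring
        · simp only [hhdef]
          simp only [Pi.smul_apply, smul_eq_mul]
          show γ n / st n * ((γ n)⁻¹ * ε n) = 1
          rw [hεn]
          field_simp [hγne n, (hstpos n).ne']
          try ring
      have heq2 : (fun k => RP2.mk
          (((dualGL (A k) : GL3) : Matrix (Fin 3) (Fin 3) ℝ) *ᵥ h' k)
          (GL3.mulVec_ne (hhne k))) = fun k => RP2.mk
          ((γ k / st k) • (((dualGL (A k) : GL3) : Matrix (Fin 3) (Fin 3) ℝ) *ᵥ h' k))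
          (smul_ne_zero (hσne k) (GL3.mulVec_ne (hhne k))) := by
        funext k
        exact (RP2.mk_smul _ _ (hσne k)).symm
      have hLne : (![0, 0, 1] : V3) ≠ 0 := e3_ne
      have hlim : Tendsto (fun k => (γ k / st k) •
          (((dualGL (A k) : GL3) : Matrix (Fin 3) (Fin 3) ℝ) *ᵥ h' k)) atTop
          (𝓝 ![0, 0, 1]) := by
        simp only [hvec]
        rw [tendsto_pi_nhds]
        intro i
        fin_cases i
        · have h1 : Tendsto (fun k => (γ k / st k) * f 0) atTop (𝓝 0) := by
            have : (fun k => (γ k / st k) * f 0) = fun k => (β k * st k) * f 0 := by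
              funext k; rw [hσeq k]
            rw [this]
            have := (hβ.mul hst0).mul_const (f 0)
            simpa using this
          simpa using h1
        · have h1 := hst0.mul_const (f 1)
          rw [zero_mul] at h1
          simpa using h1
        · simpa using (tendsto_const_nhds : Tendsto (fun _ : ℕ => (1 : ℝ)) atTop (𝓝 1))
      have hmkL : RP2.mk ![0, 0, 1] hLne = RP2.mk g hgne := by
        rw [RP2.mk_eq_mk_iff]
        refine ⟨g 2, hg2, ?_⟩
        funext i
        fin_cases i
        · simpa using hg0
        · simpa using hg1
        · simp
      rw [heq2, ← hmkL]
      exact tendsto_rp2_mk _ hLne hlim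
    · -- g 1 ≠ 0
      have hvec : ∀ n, β n •
          (((dualGL (A n) : GL3) : Matrix (Fin 3) (Fin 3) ℝ) *ᵥ h' n)
          = ![β n * f 0, f 1, S] := by
        intro n
        rw [dualA_mulVec hpos hA]
        have hεn : ε n = (γ n / β n) * S := by simp [hε, hg1]
        funext i
        fin_cases i
        · simp [hhdef]
        · simp only [hhdef]
          simp only [Pi.smul_apply, smul_eq_mul, Fin.mk_one, Matrix.cons_val_one, Matrix.head_cons,
            Matrix.cons_val_zero]
          field_simp [hβne n]
          try ring
        · simp only [hhdef]
          simp only [Pi.smul_apply, smul_eq_mul]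
          show β n * ((γ n)⁻¹ * ε n) = S
          rw [hεn]
          field_simp [hβne n, hγne n]
          try ring
      have heq2 : (fun k => RP2.mk
          (((dualGL (A k) : GL3) : Matrix (Fin 3) (Fin 3) ℝ) *ᵥ h' k)
          (GL3.mulVec_ne (hhne k))) = fun k => RP2.mk
          (β k • (((dualGL (A k) : GL3) : Matrix (Fin 3) (Fin 3) ℝ) *ᵥ h' k))
          (smul_ne_zero (hβne k) (GL3.mulVec_ne (hhne k))) := by
        funext k
        exact (RP2.mk_smul _ _ (hβne k)).symm
      have hLne : (![0, f 1, S] : V3) ≠ 0 := ne_zero_of_coord 1 (by simpa using hf1)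
      have hlim : Tendsto (fun k => β k •
          (((dualGL (A k) : GL3) : Matrix (Fin 3) (Fin 3) ℝ) *ᵥ h' k)) atTop
          (𝓝 ![0, f 1, S]) := by
        simp only [hvec]
        rw [tendsto_pi_nhds]
        intro i
        fin_cases i
        · have h1 := hβ.mul_const (f 0)
          rw [zero_mul] at h1
          simpa using h1
        · simpa using (tendsto_const_nhds : Tendsto (fun _ : ℕ => f 1) atTop (𝓝 (f 1)))
        · simpa using (tendsto_const_nhds : Tendsto (fun _ : ℕ => S) atTop (𝓝 S))
      have hmkL : RP2.mk ![0, f 1, S] hLne = RP2.mk g hgne := by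
        rw [RP2.mk_eq_mk_iff]
        refine ⟨g 1 / f 1, div_ne_zero hg1 hf1, ?_⟩
        funext i
        fin_cases i
        · simpa using hg0
        · simp only [Pi.smul_apply, smul_eq_mul, Fin.mk_one, Matrix.cons_val_one, Matrix.head_cons,
            Matrix.cons_val_zero]
          field_simp [hf1]
          try ring
        · show g 2 = ((g 1 / f 1) • (![0, f 1, S] : V3)) 2
          simp only [Pi.smul_apply, smul_eq_mul, hS, Matrix.cons_val_two, Matrix.tail_cons,
            Matrix.head_cons]
          field_simp [hf1, hg1]
          try ring
      rw [heq2, ← hmkL]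
      exact tendsto_rp2_mk _ hLne hlim
  -- assemble
  refine ⟨id, strictMono_id, u', hux, ?_⟩
  show Tendsto (fun k => flagMap (A k) (u' k)) atTop (𝓝 y)
  rw [tendsto_subtype_rng]
  have hyy : (y : RP2 × RP2) = (RP2.mk ![1, 0, 0] e1_ne, RP2.mk g hgne) := by
    rw [← hy, ← hyg]
  rw [hyy]
  exact hpt.prodMk_nhds hdual

end Aux5
noncomputable section Aux6

open Matrix Filter Topology

variable {β γ : ℕ → ℝ} {A : ℕ → GL3}

lemma claim3_backward (hpos : ∀ n, 0 < γ n ∧ γ n ≤ β n ∧ β n ≤ 1)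
    (hA : ∀ n, (A n : Matrix (Fin 3) (Fin 3) ℝ) = Matrix.diagonal ![1, β n, γ n])
    (hβ : Tendsto β atTop (𝓝 0))
    (hratio : Tendsto (fun n => γ n / β n) atTop (𝓝 0))
    (v f : V3) (hv : v ≠ 0) (hf : f ≠ 0) (x : Flag3)
    (hx : (x : RP2 × RP2) = (RP2.mk v hv, RP2.mk f hf)) (hv0 : v 0 = 0) (hf2 : f 2 ≠ 0)
    (y : Flag3) (hy : (y : RP2 × RP2).2 = RP2.mk ![0, 0, 1] e3_ne) :
    y ∈ DynSet (fun n => flagMap (A n)) x := by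
  have hβpos : ∀ n, 0 < β n := fun n => lt_of_lt_of_le (hpos n).1 (hpos n).2.1
  have hβne : ∀ n, β n ≠ 0 := fun n => (hβpos n).ne'
  have hγne : ∀ n, γ n ≠ 0 := fun n => (hpos n).1.ne'
  have hfv : f ⬝ᵥ v = 0 := x.2 v f hv hf (by rw [hx]) (by rw [hx])
  have hfv' : f 0 * v 0 + f 1 * v 1 + f 2 * v 2 = 0 := by
    simpa [dotProduct, Fin.sum_univ_three] using hfv
  have hv1 : v 1 ≠ 0 := by
    intro h1
    have hzz : f 2 * v 2 = 0 := by rw [hv0, h1] at hfv'; linarith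
    have hv2 : v 2 = 0 := by
      rcases mul_eq_zero.1 hzz with h | h
      · exact absurd h hf2
      · exact h
    apply hv
    funext i
    fin_cases i
    · exact hv0
    · exact h1
    · exact hv2
  set w := RP2.rep ((y : RP2 × RP2).1) with hwdef
  have hwne : w ≠ 0 := RP2.rep_ne _
  have hyw : (y : RP2 × RP2).1 = RP2.mk w hwne := (RP2.mk_rep _).symm
  have hw2 : w 2 = 0 := by
    have := y.2 w ![0, 0, 1] hwne e3_ne hyw hy
    simpa [dotProduct, Fin.sum_univ_three] using this
  set S : ℝ := (v 1 / w 1) * w 0 with hS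
  set ε : ℕ → ℝ := fun n => if w 1 = 0 then Real.sqrt (β n) else β n * S with hε
  have hε0 : Tendsto ε atTop (𝓝 0) := by
    by_cases hw1 : w 1 = 0
    · simp only [hε, if_pos hw1]
      have := (Real.continuous_sqrt.tendsto 0).comp hβ
      rwa [Real.sqrt_zero] at this
    · simp only [hε, if_neg hw1]
      have := hβ.mul_const S
      rwa [zero_mul] at this
  set u2 : ℕ → V3 := fun n => v + ε n • ![1, 0, 0] with hu2def
  set h2 : ℕ → V3 := fun n => f - (f 0 * ε n / v 1) • ![0, 1, 0] with hh2def
  have hu20 : ∀ n, u2 n 0 = v 0 + ε n := fun n => by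
    simp [hu2def, Matrix.vecHead, Matrix.vecTail]
  have hu21 : ∀ n, u2 n 1 = v 1 := fun n => by
    simp [hu2def, Matrix.vecHead, Matrix.vecTail]
  have hu22 : ∀ n, u2 n 2 = v 2 := fun n => by
    simp [hu2def, Matrix.vecHead, Matrix.vecTail]
  have hu2ne : ∀ n, u2 n ≠ 0 := fun n => ne_zero_of_coord 1 (by rw [hu21 n]; exact hv1)
  have hh20 : ∀ n, h2 n 0 = f 0 := fun n => by
    simp [hh2def, Matrix.vecHead, Matrix.vecTail]
  have hh21 : ∀ n, h2 n 1 = f 1 - f 0 * ε n / v 1 := fun n => by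
    simp [hh2def, Matrix.vecHead, Matrix.vecTail]
  have hh22 : ∀ n, h2 n 2 = f 2 := fun n => by
    simp [hh2def, Matrix.vecHead, Matrix.vecTail]
  have hh2ne : ∀ n, h2 n ≠ 0 := fun n => ne_zero_of_coord 2 (by rw [hh22 n]; exact hf2)
  have hflag : ∀ n, h2 n ⬝ᵥ u2 n = 0 := by
    intro n
    rw [show h2 n ⬝ᵥ u2 n = h2 n 0 * u2 n 0 + h2 n 1 * u2 n 1 + h2 n 2 * u2 n 2 from by
      simp [dotProduct, Fin.sum_univ_three]]
    rw [hh20, hh21, hh22, hu20, hu21, hu22]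
    have hprod : (f 1 - f 0 * ε n / v 1) * v 1 = f 1 * v 1 - f 0 * ε n := by
      field_simp
      try ring
    rw [hprod]
    linarith [hfv']
  set u' : ℕ → Flag3 := fun n =>
    ⟨(RP2.mk (u2 n) (hu2ne n), RP2.mk (h2 n) (hh2ne n)),
      mem_flagSpace_mk (hu2ne n) (hh2ne n) (hflag n)⟩ with hu'
  have hu2lim : Tendsto u2 atTop (𝓝 v) := by
    have h2' : Tendsto (fun n => ε n • (![1, 0, 0] : V3)) atTop (𝓝 0) := by
      have := hε0.smul_const (![1, 0, 0] : V3)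
      rwa [zero_smul] at this
    have h3 := Tendsto.add (tendsto_const_nhds : Tendsto (fun _ : ℕ => v) atTop (𝓝 v)) h2'
    rw [add_zero] at h3
    exact h3
  have hh2lim : Tendsto h2 atTop (𝓝 f) := by
    have hcoef : Tendsto (fun n => f 0 * ε n / v 1) atTop (𝓝 0) := by
      have h := (hε0.const_mul (f 0)).div_const (v 1)
      rw [mul_zero, zero_div] at h
      exact h
    have h2' : Tendsto (fun n => (f 0 * ε n / v 1) • (![0, 1, 0] : V3)) atTop (𝓝 0) := by
      have := hcoef.smul_const (![0, 1, 0] : V3)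
      rwa [zero_smul] at this
    have h3 := Tendsto.sub (tendsto_const_nhds : Tendsto (fun _ : ℕ => f) atTop (𝓝 f)) h2'
    rw [sub_zero] at h3
    exact h3
  have hux : Tendsto u' atTop (𝓝 x) := by
    rw [tendsto_subtype_rng, hx]
    exact (tendsto_rp2_mk hu2ne hv hu2lim).prodMk_nhds (tendsto_rp2_mk hh2ne hf hh2lim)
  have hdual := dual_tendsto hpos hA id hβ hratio h2 f hh2lim hf2 hh2ne
  have hpt : Tendsto (fun k => RP2.mk ((A k : Matrix (Fin 3) (Fin 3) ℝ) *ᵥ u2 k)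
      (GL3.mulVec_ne (hu2ne k))) atTop (𝓝 (RP2.mk w hwne)) := by
    by_cases hw1 : w 1 = 0
    · -- target point is [e₁]
      have hw0ne : w 0 ≠ 0 := by
        intro h0
        apply hwne
        funext i
        fin_cases i
        · exact h0
        · exact hw1
        · exact hw2
      set st : ℕ → ℝ := fun n => Real.sqrt (β n) with hst
      have hstpos : ∀ n, 0 < st n := fun n => Real.sqrt_pos.2 (hβpos n)
      have hstsq : ∀ n, st n * st n = β n := fun n => Real.mul_self_sqrt (hβpos n).le
      have hst0 : Tendsto st atTop (𝓝 0) := by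
        have := (Real.continuous_sqrt.tendsto 0).comp hβ
        rwa [Real.sqrt_zero] at this
      have hεn : ∀ n, ε n = st n := fun n => by simp [hε, hw1, hst]
      have hvec : ∀ n, (st n)⁻¹ • ((A n : Matrix (Fin 3) (Fin 3) ℝ) *ᵥ u2 n)
          = ![1, st n * v 1, (γ n / st n) * v 2] := by
        intro n
        rw [A_mulVec hA]
        funext i
        fin_cases i
        · show (st n)⁻¹ * u2 n 0 = 1
          rw [hu20 n, hv0, hεn n, zero_add]
          field_simp [(hstpos n).ne']
        · show (st n)⁻¹ * (β n * u2 n 1) = st n * v 1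
          rw [hu21 n, ← hstsq n]
          field_simp [(hstpos n).ne']
          try ring
        · show (st n)⁻¹ * (γ n * u2 n 2) = (γ n / st n) * v 2
          rw [hu22 n]
          field_simp [(hstpos n).ne']
          try ring
      have heq2 : (fun k => RP2.mk ((A k : Matrix (Fin 3) (Fin 3) ℝ) *ᵥ u2 k)
          (GL3.mulVec_ne (hu2ne k))) = fun k => RP2.mk
          ((st k)⁻¹ • ((A k : Matrix (Fin 3) (Fin 3) ℝ) *ᵥ u2 k))
          (smul_ne_zero (inv_ne_zero (hstpos k).ne') (GL3.mulVec_ne (hu2ne k))) := by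
        funext k
        exact (RP2.mk_smul _ _ (inv_ne_zero (hstpos k).ne')).symm
      have hLne : (![1, 0, 0] : V3) ≠ 0 := e1_ne
      have hlim : Tendsto (fun k => (st k)⁻¹ •
          ((A k : Matrix (Fin 3) (Fin 3) ℝ) *ᵥ u2 k)) atTop (𝓝 ![1, 0, 0]) := by
        simp only [hvec]
        rw [tendsto_pi_nhds]
        intro i
        fin_cases i
        · simpa using (tendsto_const_nhds : Tendsto (fun _ : ℕ => (1 : ℝ)) atTop (𝓝 1))
        · have h1 := hst0.mul_const (v 1)
          rw [zero_mul] at h1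
          simpa using h1
        · have hb : ∀ n, γ n / st n ≤ st n := by
            intro n
            have h1 : γ n / st n ≤ β n / st n := (div_le_div_iff_of_pos_right (hstpos n)).2 (hpos n).2.1
            have h2 : β n / st n = st n := by
              rw [← hstsq n]
              field_simp
            rw [h2] at h1
            exact h1
          have h2c : Tendsto (fun n => γ n / st n) atTop (𝓝 0) :=
            squeeze_zero (fun n => div_nonneg (hpos n).1.le (hstpos n).le) hb hst0
          have h3 := h2c.mul_const (v 2)
          rw [zero_mul] at h3
          simpa using h3
      have hmkL : RP2.mk ![1, 0, 0] hLne = RP2.mk w hwne := by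
        rw [RP2.mk_eq_mk_iff]
        refine ⟨w 0, hw0ne, ?_⟩
        funext i
        fin_cases i
        · simp
        · simpa using hw1
        · simpa using hw2
      rw [heq2, ← hmkL]
      exact tendsto_rp2_mk _ hLne hlim
    · -- w 1 ≠ 0
      have hεn : ∀ n, ε n = β n * S := fun n => by simp [hε, hw1]
      have hvec : ∀ n, (β n)⁻¹ • ((A n : Matrix (Fin 3) (Fin 3) ℝ) *ᵥ u2 n)
          = ![S, v 1, (γ n / β n) * v 2] := by
        intro n
        rw [A_mulVec hA]
        funext i
        fin_cases i
        · show (β n)⁻¹ * u2 n 0 = S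
          rw [hu20 n, hv0, hεn n, zero_add]
          field_simp [hβne n]
        · show (β n)⁻¹ * (β n * u2 n 1) = v 1
          rw [hu21 n]
          field_simp [hβne n]
        · show (β n)⁻¹ * (γ n * u2 n 2) = (γ n / β n) * v 2
          rw [hu22 n]
          field_simp [hβne n]
          try ring
      have heq2 : (fun k => RP2.mk ((A k : Matrix (Fin 3) (Fin 3) ℝ) *ᵥ u2 k)
          (GL3.mulVec_ne (hu2ne k))) = fun k => RP2.mk
          ((β k)⁻¹ • ((A k : Matrix (Fin 3) (Fin 3) ℝ) *ᵥ u2 k))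
          (smul_ne_zero (inv_ne_zero (hβne k)) (GL3.mulVec_ne (hu2ne k))) := by
        funext k
        exact (RP2.mk_smul _ _ (inv_ne_zero (hβne k))).symm
      have hLne : (![S, v 1, 0] : V3) ≠ 0 := ne_zero_of_coord 1 (by simpa using hv1)
      have hlim : Tendsto (fun k => (β k)⁻¹ •
          ((A k : Matrix (Fin 3) (Fin 3) ℝ) *ᵥ u2 k)) atTop (𝓝 ![S, v 1, 0]) := by
        simp only [hvec]
        rw [tendsto_pi_nhds]
        intro i
        fin_cases i
        · simpa using (tendsto_const_nhds : Tendsto (fun _ : ℕ => S) atTop (𝓝 S))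
        · simpa using (tendsto_const_nhds : Tendsto (fun _ : ℕ => v 1) atTop (𝓝 (v 1)))
        · have h1 := hratio.mul_const (v 2)
          rw [zero_mul] at h1
          simpa using h1
      have hmkL : RP2.mk ![S, v 1, 0] hLne = RP2.mk w hwne := by
        rw [RP2.mk_eq_mk_iff]
        refine ⟨w 1 / v 1, div_ne_zero hw1 hv1, ?_⟩
        funext i
        fin_cases i
        · show w 0 = ((w 1 / v 1) • (![S, v 1, 0] : V3)) 0
          simp only [Pi.smul_apply, smul_eq_mul, hS, Matrix.cons_val_zero]
          field_simp
          try ring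
        · show w 1 = ((w 1 / v 1) • (![S, v 1, 0] : V3)) 1
          simp only [Pi.smul_apply, smul_eq_mul, Matrix.cons_val_one, Matrix.head_cons,
            Matrix.cons_val_zero]
          field_simp
        · show w 2 = ((w 1 / v 1) • (![S, v 1, 0] : V3)) 2
          simp only [Pi.smul_apply, smul_eq_mul, Matrix.cons_val_two, Matrix.tail_cons,
            Matrix.head_cons]
          simp [hw2]
      rw [heq2, ← hmkL]
      exact tendsto_rp2_mk _ hLne hlim
  refine ⟨id, strictMono_id, u', hux, ?_⟩
  show Tendsto (fun k => flagMap (A k) (u' k)) atTop (𝓝 y)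
  rw [tendsto_subtype_rng]
  have hyy : (y : RP2 × RP2) = (RP2.mk w hwne, RP2.mk ![0, 0, 1] e3_ne) := by
    rw [← hyw, ← hy]
  rw [hyy]
  exact hpt.prodMk_nhds hdual

end Aux6
/-- Lemma 2.15, claims 1–3 (balanced dynamics on the flag space, repulsive part,
diagonal case). -/
theorem balanced_flag_dynamics_repulsive
    (β γ : ℕ → ℝ) (hpos : ∀ n, 0 < γ n ∧ γ n ≤ β n ∧ β n ≤ 1)
    (hβ : Filter.Tendsto β Filter.atTop (nhds 0))
    (hratio : Filter.Tendsto (fun n => γ n / β n) Filter.atTop (nhds 0))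
    (A : ℕ → GL3)
    (hA : ∀ n, (A n : Matrix (Fin 3) (Fin 3) ℝ) = Matrix.diagonal ![1, β n, γ n])
    (v f : V3) (hv : v ≠ 0) (hf : f ≠ 0)
    (x : Flag3) (hx : (x : RP2 × RP2) = (RP2.mk v hv, RP2.mk f hf)) :
    (v 0 ≠ 0 → f 2 ≠ 0 →
      DynSet (fun n => flagMap (A n)) x =
        {y : Flag3 | (y : RP2 × RP2) = (RP2.mk ![1, 0, 0] e1_ne, RP2.mk ![0, 0, 1] e3_ne)}) ∧
    (f 2 = 0 → v 0 ≠ 0 →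
      DynSet (fun n => flagMap (A n)) x =
        {y : Flag3 | (y : RP2 × RP2).1 = RP2.mk ![1, 0, 0] e1_ne}) ∧
    (v 0 = 0 → f 2 ≠ 0 →
      DynSet (fun n => flagMap (A n)) x =
        {y : Flag3 | (y : RP2 × RP2).2 = RP2.mk ![0, 0, 1] e3_ne}) := by
  refine ⟨?_, ?_, ?_⟩
  · intro hv0 hf2
    ext y
    simp only [Set.mem_setOf_eq]
    constructor
    · intro hy
      have h1 := forward_point_lemma hpos hA hβ v f hv hf x hx hv0 y hy
      have h2 := forward_dual_lemma hpos hA hβ hratio v f hv hf x hx hf2 y hy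
      exact Prod.ext_iff.2 ⟨h1, h2⟩
    · intro hy
      exact backward_const hpos hA hβ hratio v f hv hf x hx hv0 hf2 y hy
  · intro hf2 hv0
    ext y
    simp only [Set.mem_setOf_eq]
    constructor
    · intro hy
      exact forward_point_lemma hpos hA hβ v f hv hf x hx hv0 y hy
    · intro hy
      exact claim2_backward hpos hA hβ hratio v f hv hf x hx hv0 hf2 y hy
  · intro hv0 hf2
    ext y
    simp only [Set.mem_setOf_eq]
    constructor
    · intro hy
      exact forward_dual_lemma hpos hA hβ hratio v f hv hf x hx hf2 y hy
    · intro hy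
      exact claim3_backward hpos hA hβ hratio v f hv hf x hx hv0 hf2 y hy
end

section
/- Unbalanced type α dynamics on the dual projective plane (Lemma 2.11, diagonal case): Let a_n = diag(1, β_n, γ_n) ∈ GL(3,ℝ) with 0 < γ_n ≤ β_n ≤ 1 for all n, β_n → 0 and γ_n/β_n → λ for some λ ∈ (0,1], acting on the dual projective plane ℝP²*. Then: (1) for every [f] = [f₁:f₂:f₃]* ∈ ℝP²* with [f] ≠ [1:0:0]*, the dynamic set D_{(a_n)}([f]) equals {[0 : λf₂ : f₃]*}; (2) D_{(a_n)}([1:0:0]*) = ℝP²*. -/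
open Matrix Filter Topology Set

noncomputable section AuxProj

open Matrix Filter Topology Set

lemma exists_coord {v : V3} (hv : v ≠ 0) : ∃ i, v i ≠ 0 := by
  by_contra h
  push_neg at h
  exact hv (funext fun i => h i)

/-- Sum of squares of coordinates. -/
def Qf (v : V3) : ℝ := v 0 ^ 2 + v 1 ^ 2 + v 2 ^ 2

lemma Qf_pos {v : V3} (hv : v ≠ 0) : 0 < Qf v := by
  obtain ⟨i, hi⟩ := exists_coord hv
  have h0 := sq_nonneg (v 0); have h1 := sq_nonneg (v 1); have h2 := sq_nonneg (v 2)
  have hip : 0 < v i ^ 2 := (sq_nonneg _).lt_of_ne (Ne.symm (pow_ne_zero 2 hi))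
  fin_cases i <;>
    simp only [Fin.zero_eta, Fin.mk_one, Fin.isValue, Fin.reduceFinMk] at hip <;>
    unfold Qf <;> nlinarith

lemma Qf_smul (c : ℝ) (v : V3) : Qf (c • v) = c ^ 2 * Qf v := by
  simp only [Qf, Pi.smul_apply, smul_eq_mul]
  ring

lemma continuous_Qf : Continuous Qf :=
  (((continuous_apply (0 : Fin 3)).pow 2).add ((continuous_apply (1 : Fin 3)).pow 2)).add
    ((continuous_apply (2 : Fin 3)).pow 2)

/-- A scale-invariant "section" of the projective quotient, nonzero exactly on the
chart where the `j`-th coordinate is nonzero. -/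
def secFn (j : Fin 3) : RP2 → V3 :=
  Quotient.lift (fun a : {v : V3 // v ≠ 0} => (a.1 j / Qf a.1) • a.1)
    (by
      rintro a b ⟨c, hc, h⟩
      have hQ : Qf a.1 ≠ 0 := (Qf_pos a.2).ne'
      funext i
      simp only [h, Qf_smul, Pi.smul_apply, smul_eq_mul]
      field_simp)

lemma secFn_mk (j : Fin 3) (v : V3) (hv : v ≠ 0) :
    secFn j (RP2.mk v hv) = (v j / Qf v) • v := rfl

lemma continuous_secFn (j : Fin 3) : Continuous (secFn j) := by
  apply Continuous.quotient_lift
  exact (Continuous.div ((continuous_apply j).comp continuous_subtype_val)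
      (continuous_Qf.comp continuous_subtype_val)
      (fun a => (Qf_pos a.2).ne')).smul continuous_subtype_val

lemma mk_secFn (j : Fin 3) (p : RP2) : ∀ h : secFn j p ≠ 0, RP2.mk (secFn j p) h = p := by
  refine RP2.ind (P := fun p => ∀ h : secFn j p ≠ 0, RP2.mk (secFn j p) h = p)
    (fun v hv => ?_) p
  intro h
  have hc : v j / Qf v ≠ 0 := by
    intro h0
    apply h
    show (v j / Qf v) • v = 0
    rw [h0, zero_smul]
  exact (RP2.mk_eq_mk_iff.2 ⟨v j / Qf v, hc, rfl⟩).symm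

lemma mk'_eq_mk {v : V3} (h : v ≠ 0) : RP2.mk' v = RP2.mk v h := dif_neg h

lemma tendsto_mkP {w : ℕ → V3} {W : V3} (hW : W ≠ 0)
    (h : Tendsto w atTop (𝓝 W)) :
    Tendsto (fun k => RP2.mk' (w k)) atTop (𝓝 (RP2.mk W hW)) := by
  have hev : ∀ᶠ k in atTop, w k ≠ 0 := h.eventually_ne hW
  set t : ℕ → {v : V3 // v ≠ 0} := fun k => if hk : w k ≠ 0 then ⟨w k, hk⟩ else ⟨W, hW⟩ with ht
  have htt : Tendsto t atTop (𝓝 (⟨W, hW⟩ : {v : V3 // v ≠ 0})) := by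
    rw [tendsto_subtype_rng]
    refine h.congr' ?_
    filter_upwards [hev] with k hk
    simp [ht, hk]
  have hq : Tendsto (fun k => Quotient.mk projSetoid (t k)) atTop
      (𝓝 (Quotient.mk projSetoid (⟨W, hW⟩ : {v : V3 // v ≠ 0}))) :=
    (continuous_quotient_mk'.tendsto _).comp htt
  refine hq.congr' ?_
  filter_upwards [hev] with k hk
  show Quotient.mk projSetoid (t k) = RP2.mk' (w k)
  rw [mk'_eq_mk hk]
  simp only [ht, dif_pos hk]
  rfl

lemma lim_unique {s : ℕ → RP2} {y : RP2} {z : V3} (hz : z ≠ 0)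
    (h1 : Tendsto s atTop (𝓝 y)) (h2 : Tendsto s atTop (𝓝 (RP2.mk z hz))) :
    y = RP2.mk z hz := by
  obtain ⟨j, hj⟩ := exists_coord hz
  have c1 : Tendsto (fun k => secFn j (s k)) atTop (𝓝 (secFn j y)) :=
    ((continuous_secFn j).tendsto y).comp h1
  have c2 : Tendsto (fun k => secFn j (s k)) atTop (𝓝 (secFn j (RP2.mk z hz))) :=
    ((continuous_secFn j).tendsto _).comp h2
  have he : secFn j y = secFn j (RP2.mk z hz) := tendsto_nhds_unique c1 c2
  have hne : secFn j (RP2.mk z hz) ≠ 0 := by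
    rw [secFn_mk]
    exact smul_ne_zero (div_ne_zero hj (Qf_pos hz).ne') hz
  have hy : secFn j y ≠ 0 := he ▸ hne
  rw [← mk_secFn j y hy, ← mk_secFn j (RP2.mk z hz) hne]
  exact RP2.mk_eq_mk_iff.2 ⟨1, one_ne_zero, by rw [one_smul, ← he]⟩

end AuxProj

/-- Lemma 2.11 (unbalanced type α dynamics on the dual projective plane, diagonal
case).  A class `[f₁ : f₂ : f₃]*` of linear forms is recorded through its coefficient
vector, and `g` acts on it by `g · [f] = [f ∘ g⁻¹]`, i.e. through `dualGL g`. -/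
theorem unbalanced_alpha_dual_dynamics
    (β γ : ℕ → ℝ) (hpos : ∀ n, 0 < γ n ∧ γ n ≤ β n ∧ β n ≤ 1)
    (hβ : Filter.Tendsto β Filter.atTop (nhds 0)) (l : ℝ) (hl0 : 0 < l) (hl1 : l ≤ 1)
    (hratio : Filter.Tendsto (fun n => γ n / β n) Filter.atTop (nhds l))
    (A : ℕ → GL3)
    (hA : ∀ n, (A n : Matrix (Fin 3) (Fin 3) ℝ) = Matrix.diagonal ![1, β n, γ n]) :
    (∀ (f : V3) (hf : f ≠ 0), ¬(f 1 = 0 ∧ f 2 = 0) →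
      DynSet (fun n => RP2.mapMat (dualGL (A n))) (RP2.mk f hf) =
        {RP2.mk' ![0, l * f 1, f 2]}) ∧
    DynSet (fun n => RP2.mapMat (dualGL (A n))) (RP2.mk ![1, 0, 0] e1_ne) = Set.univ := by
  have hγpos : ∀ n, 0 < γ n := fun n => (hpos n).1
  have hβpos : ∀ n, 0 < β n := fun n => lt_of_lt_of_le (hγpos n) (hpos n).2.1
  have hγ0 : Tendsto γ atTop (𝓝 0) :=
    squeeze_zero (fun n => (hγpos n).le) (fun n => (hpos n).2.1) hβ
  have hMval : ∀ n, ((dualGL (A n) : GL3) : Matrix (Fin 3) (Fin 3) ℝ)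
      = Matrix.diagonal ![1, (β n)⁻¹, (γ n)⁻¹] := by
    intro n
    have hD : (A n : Matrix (Fin 3) (Fin 3) ℝ) * Matrix.diagonal ![1, (β n)⁻¹, (γ n)⁻¹] = 1 := by
      rw [hA n, Matrix.diagonal_mul_diagonal]
      have hfun : (fun i => (![1, β n, γ n] : V3) i * (![1, (β n)⁻¹, (γ n)⁻¹] : V3) i)
          = (1 : V3) := by
        funext i
        fin_cases i <;>
          simp [mul_inv_cancel₀ (hβpos n).ne', mul_inv_cancel₀ (hγpos n).ne']
      rw [hfun]
      exact Matrix.diagonal_one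
    have hinv : (((A n)⁻¹ : GL3) : Matrix (Fin 3) (Fin 3) ℝ)
        = Matrix.diagonal ![1, (β n)⁻¹, (γ n)⁻¹] := by
      calc (((A n)⁻¹ : GL3) : Matrix (Fin 3) (Fin 3) ℝ)
          = (((A n)⁻¹ : GL3) : Matrix (Fin 3) (Fin 3) ℝ)
            * ((A n : Matrix (Fin 3) (Fin 3) ℝ)
              * Matrix.diagonal ![1, (β n)⁻¹, (γ n)⁻¹]) := by rw [hD, mul_one]
        _ = _ := by rw [← mul_assoc, Units.inv_mul, one_mul]
    show (((A n)⁻¹ : GL3) : Matrix (Fin 3) (Fin 3) ℝ)ᵀ = _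
    rw [hinv, Matrix.diagonal_transpose]
  have hact : ∀ n (v : V3) (hv : v ≠ 0),
      RP2.mapMat (dualGL (A n)) (RP2.mk v hv)
        = RP2.mk' ![γ n * v 0, (γ n / β n) * v 1, v 2] := by
    intro n v hv
    rw [RP2.mapMat_mk]
    have heq : (![γ n * v 0, (γ n / β n) * v 1, v 2] : V3)
        = γ n • (((dualGL (A n)) : Matrix (Fin 3) (Fin 3) ℝ) *ᵥ v) := by
      funext i
      rw [hMval n]
      fin_cases i <;>
        simp [Matrix.mulVec_diagonal] <;>
        field_simp [(hγpos n).ne', (hβpos n).ne'] <;> ring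
    have hsne : (![γ n * v 0, (γ n / β n) * v 1, v 2] : V3) ≠ 0 := by
      rw [heq]; exact smul_ne_zero (hγpos n).ne' (GL3.mulVec_ne hv)
    rw [mk'_eq_mk hsne]
    exact RP2.mk_eq_mk_iff.2 ⟨γ n, (hγpos n).ne', heq⟩
  have hconv : ∀ (φ : ℕ → ℕ), StrictMono φ → ∀ (w : ℕ → V3) (W : V3),
      Tendsto w atTop (𝓝 W) →
      Tendsto (fun k => (![γ (φ k) * w k 0, (γ (φ k) / β (φ k)) * w k 1, w k 2] : V3)) atTop
        (𝓝 ![0, l * W 1, W 2]) := by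
    intro φ hφ w W hw
    have hγφ : Tendsto (fun k => γ (φ k)) atTop (𝓝 0) := hγ0.comp hφ.tendsto_atTop
    have hrφ : Tendsto (fun k => γ (φ k) / β (φ k)) atTop (𝓝 l) := hratio.comp hφ.tendsto_atTop
    have hwi : ∀ i, Tendsto (fun k => w k i) atTop (𝓝 (W i)) := fun i => (tendsto_pi_nhds.1 hw) i
    rw [tendsto_pi_nhds]
    intro i
    fin_cases i
    · simpa using hγφ.mul (hwi 0)
    · simpa using hrφ.mul (hwi 1)
    · simpa using hwi 2
  have hβs : Tendsto (fun n => Real.sqrt (β n)) atTop (𝓝 0) := by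
    have := (Real.continuous_sqrt.tendsto 0).comp hβ
    simpa [Function.comp_def] using this
  constructor
  · intro f hf hne
    have hT : (![0, l * f 1, f 2] : V3) ≠ 0 := by
      rcases not_and_or.1 hne with h | h
      · exact ne_zero_of_coord 1 (by simp [mul_ne_zero hl0.ne' h])
      · exact ne_zero_of_coord 2 (by simp [h])
    ext y
    simp only [Set.mem_singleton_iff]
    rw [mk'_eq_mk hT]
    constructor
    · rintro ⟨φ, hφ, u, hu, hgu⟩
      obtain ⟨j, hj⟩ := exists_coord hf
      have hcne : f j / Qf f ≠ 0 := div_ne_zero hj (Qf_pos hf).ne'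
      have hWne : (f j / Qf f) • f ≠ 0 := smul_ne_zero hcne hf
      have hwlim : Tendsto (fun k => secFn j (u k)) atTop (𝓝 ((f j / Qf f) • f)) := by
        have := ((continuous_secFn j).tendsto (RP2.mk f hf)).comp hu
        rwa [secFn_mk] at this
      have hev : ∀ᶠ k in atTop, secFn j (u k) ≠ 0 := hwlim.eventually_ne hWne
      have hlimv := hconv φ hφ _ _ hwlim
      have hT2 : (![0, l * ((f j / Qf f) • f) 1, ((f j / Qf f) • f) 2] : V3)
          = (f j / Qf f) • ![0, l * f 1, f 2] := by
        funext i
        fin_cases i <;> simp [Pi.smul_apply, smul_eq_mul] <;> ring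
      have hWT : (![0, l * ((f j / Qf f) • f) 1, ((f j / Qf f) • f) 2] : V3) ≠ 0 := by
        rw [hT2]; exact smul_ne_zero hcne hT
      have h1 := tendsto_mkP hWT hlimv
      have hpt : RP2.mk _ hWT = RP2.mk ![0, l * f 1, f 2] hT :=
        (RP2.mk_eq_mk_iff.2 ⟨f j / Qf f, hcne, hT2⟩).symm
      rw [hpt] at h1
      have hsame : (fun k => RP2.mapMat (dualGL (A (φ k))) (u k))
          =ᶠ[atTop] fun k => RP2.mk' (![γ (φ k) * (secFn j (u k)) 0,
            (γ (φ k) / β (φ k)) * (secFn j (u k)) 1, (secFn j (u k)) 2] : V3) := by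
        filter_upwards [hev] with k hk
        have h2 := hact (φ k) (secFn j (u k)) hk
        rw [mk_secFn j (u k) hk] at h2
        exact h2
      exact lim_unique hT hgu (h1.congr' hsame.symm)
    · rintro rfl
      refine ⟨id, strictMono_id, fun _ => RP2.mk f hf, tendsto_const_nhds, ?_⟩
      have h1 := tendsto_mkP hT (hconv id strictMono_id (fun _ => f) f tendsto_const_nhds)
      exact h1.congr fun k => (hact k f hf).symm
  · rw [Set.eq_univ_iff_forall]
    intro y
    refine RP2.ind (fun w hw => ?_) y
    by_cases h0 : w 0 = 0
    · -- w 0 = 0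
      have hsβ : ∀ n, Real.sqrt (β n) ≠ 0 := fun n => (Real.sqrt_pos.2 (hβpos n)).ne'
      have hsq : ∀ n, Real.sqrt (β n) * Real.sqrt (β n) = β n :=
        fun n => Real.mul_self_sqrt (hβpos n).le
      set r : ℕ → V3 := fun n =>
        ![1, Real.sqrt (β n) * w 1, (γ n / β n) * Real.sqrt (β n) * w 2] with hrdef
      have hrne : ∀ n, r n ≠ 0 := fun n => ne_zero_of_coord 0 (by simp [hrdef])
      refine ⟨id, strictMono_id, fun n => RP2.mk' (r n), ?_, ?_⟩
      · have hr : Tendsto r atTop (𝓝 ![1, 0, 0]) := by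
          rw [tendsto_pi_nhds]; intro i
          fin_cases i
          · simpa [hrdef] using (tendsto_const_nhds : Tendsto (fun _ : ℕ => (1:ℝ)) atTop _)
          · simpa [hrdef] using hβs.mul_const (w 1)
          · simpa [hrdef] using (hratio.mul hβs).mul_const (w 2)
        exact tendsto_mkP e1_ne hr
      · have hkey : ∀ n, RP2.mapMat (dualGL (A n)) (RP2.mk' (r n))
            = RP2.mk' ![Real.sqrt (β n), w 1, w 2] := by
          intro n
          rw [mk'_eq_mk (hrne n), RP2.mapMat_mk]
          have himg : (![Real.sqrt (β n), w 1, w 2] : V3)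
              = Real.sqrt (β n) • (((dualGL (A n)) : Matrix (Fin 3) (Fin 3) ℝ) *ᵥ r n) := by
            funext i
            rw [hMval n]
            fin_cases i
            · simp [Matrix.mulVec_diagonal, hrdef]
            · simp [Matrix.mulVec_diagonal, hrdef]
              rw [show (β n) = Real.sqrt (β n) * Real.sqrt (β n) from (hsq n).symm]
              field_simp [hsβ n]
              rw [Real.sqrt_sq (Real.sqrt_nonneg _)]
            · simp [Matrix.mulVec_diagonal, hrdef]
              rw [show (β n) = Real.sqrt (β n) * Real.sqrt (β n) from (hsq n).symm]
              field_simp [hsβ n, (hγpos n).ne']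
              rw [Real.sqrt_sq (Real.sqrt_nonneg _)]
          have hne2 : (![Real.sqrt (β n), w 1, w 2] : V3) ≠ 0 :=
            ne_zero_of_coord 0 (by simp [hsβ n])
          rw [mk'_eq_mk hne2]
          exact RP2.mk_eq_mk_iff.2 ⟨Real.sqrt (β n), hsβ n, himg⟩
        have hW : (![0, w 1, w 2] : V3) ≠ 0 := by
          obtain ⟨j, hj⟩ := exists_coord hw
          fin_cases j
          · simp only [Fin.zero_eta, Fin.isValue] at hj
            exact absurd h0 hj
          · exact ne_zero_of_coord 1 (by simpa using hj)
          · exact ne_zero_of_coord 2 (by simpa using hj)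
        have hs : Tendsto (fun n => (![Real.sqrt (β n), w 1, w 2] : V3)) atTop
            (𝓝 ![0, w 1, w 2]) := by
          rw [tendsto_pi_nhds]; intro i; fin_cases i
          · simpa using hβs
          · simpa using (tendsto_const_nhds : Tendsto (fun _ : ℕ => w 1) atTop _)
          · simpa using (tendsto_const_nhds : Tendsto (fun _ : ℕ => w 2) atTop _)
        have h1 := tendsto_mkP hW hs
        have hpt : RP2.mk ![0, w 1, w 2] hW = RP2.mk w hw := by
          refine RP2.mk_eq_mk_iff.2 ⟨1, one_ne_zero, ?_⟩
          rw [one_smul]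
          funext i
          fin_cases i <;> simp [h0]
        rw [hpt] at h1
        exact h1.congr fun n => (hkey n).symm
    · -- w 0 ≠ 0
      set v : ℕ → V3 := fun n => ![w 0, β n * w 1, γ n * w 2] with hvdef
      have hvne : ∀ n, v n ≠ 0 := fun n => ne_zero_of_coord 0 (by simp [hvdef, h0])
      refine ⟨id, strictMono_id, fun n => RP2.mk' (v n), ?_, ?_⟩
      · have hv : Tendsto v atTop (𝓝 ![w 0, 0, 0]) := by
          rw [tendsto_pi_nhds]; intro i; fin_cases i
          · simpa [hvdef] using (tendsto_const_nhds : Tendsto (fun _ : ℕ => w 0) atTop _)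
          · simpa [hvdef] using hβ.mul_const (w 1)
          · simpa [hvdef] using hγ0.mul_const (w 2)
        have hW0 : (![w 0, 0, 0] : V3) ≠ 0 := ne_zero_of_coord 0 (by simp [h0])
        have h1 := tendsto_mkP hW0 hv
        have hpt : RP2.mk ![w 0, 0, 0] hW0 = RP2.mk ![1, 0, 0] e1_ne := by
          refine (RP2.mk_eq_mk_iff.2 ⟨w 0, h0, ?_⟩).symm
          funext i
          fin_cases i <;> simp
        rwa [hpt] at h1
      · have hkey : ∀ n, RP2.mapMat (dualGL (A n)) (RP2.mk' (v n)) = RP2.mk w hw := by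
          intro n
          rw [mk'_eq_mk (hvne n), RP2.mapMat_mk]
          refine (RP2.mk_eq_mk_iff.2 ⟨1, one_ne_zero, ?_⟩).symm
          rw [one_smul]
          funext i
          rw [hMval n]
          fin_cases i <;> simp [Matrix.mulVec_diagonal, hvdef] <;>
            field_simp [(hγpos n).ne', (hβpos n).ne']
        exact tendsto_const_nhds.congr fun n => (hkey n).symm
end
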